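/- arXiv:1010.4173 — 3 statements merged into one kernel-verified Lean document; each statement's English description precedes it below -/
import Mathlib

section
/- Let X_1, X_2, ... be i.i.d. with continuous distribution F, thresholds γ < β, and critical boundaries α_{k,l} = α + b_k − c_l ≥ β. Then for k ≥ 0 and l ≥ 1, the joint probability P{N_+(ν) = k, N_-(ν) = l} equals [1 − F̄(β)/F̄(γ)]^k · ∏_{h=0}^{l−1} [1 − F̄(α_{k,h})/F̄(β)] · [F̄(α_{k,l})/F̄(γ)], where F̄ = 1 − F. -/
open MeasureTheory ProbabilityTheory Filter Set

/-- Numbers `(N₊(n), N₋(n))` of strengthening resp. weakening (harmful nonfatal) shocks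
among the first `n` shocks `X 0, …, X (n-1)`. -/
noncomputable def shockCounts (γ β α : ℝ) (b c : ℕ → ℝ) (X : ℕ → ℝ) : ℕ → ℕ × ℕ
  | 0 => (0, 0)
  | n + 1 =>
      let p := shockCounts γ β α b c X n
      (if γ ≤ X n ∧ X n < β ∧ p.2 = 0 then p.1 + 1 else p.1,
       if β ≤ X n ∧ X n < α + b p.1 - c p.2 then p.2 + 1 else p.2)

/-- The `(i+1)`-th shock `X i` is fatal: it exceeds the current critical boundary. -/
def fatalShock (γ β α : ℝ) (b c : ℕ → ℝ) (X : ℕ → ℝ) (i : ℕ) : Prop :=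
  α + b (shockCounts γ β α b c X i).1 - c (shockCounts γ β α b c X i).2 ≤ X i

/-- 0-based index of the first fatal shock (junk value if there is none);
the paper's `ν` equals this plus one. -/
noncomputable def nuShock (γ β α : ℝ) (b c : ℕ → ℝ) (X : ℕ → ℝ) : ℕ :=
  sInf {i | fatalShock γ β α b c X i}

/-- Survival function `F̄(x) = P(X > x)` of a law `μ` on `ℝ`, as a real number. -/
noncomputable def survival (μ : Measure ℝ) (x : ℝ) : ℝ := (μ (Set.Ioi x)).toReal

/-! ### Auxiliary deterministic lemmas -/

section Det
variable (γ β α : ℝ) (b c : ℕ → ℝ)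

/-- No fatal shock among the first `n` shocks. -/
def shockNF (x : ℕ → ℝ) (n : ℕ) : Prop := ∀ i < n, ¬ fatalShock γ β α b c x i

lemma shockNF_succ (x : ℕ → ℝ) (n : ℕ) :
    shockNF γ β α b c x (n+1) ↔ shockNF γ β α b c x n ∧ ¬ fatalShock γ β α b c x n := by
  constructor
  · intro h
    exact ⟨fun i hi => h i (Nat.lt_succ_of_lt hi), h n (Nat.lt_succ_self n)⟩
  · rintro ⟨h1, h2⟩ i hi
    rcases Nat.lt_succ_iff_lt_or_eq.1 hi with hi' | rfl
    · exact h1 i hi'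
    · exact h2

lemma shockCounts_succ (x : ℕ → ℝ) (n : ℕ) :
    shockCounts γ β α b c x (n+1) =
      ((if γ ≤ x n ∧ x n < β ∧ (shockCounts γ β α b c x n).2 = 0
          then (shockCounts γ β α b c x n).1 + 1 else (shockCounts γ β α b c x n).1),
       (if β ≤ x n ∧ x n < α + b (shockCounts γ β α b c x n).1
            - c (shockCounts γ β α b c x n).2
          then (shockCounts γ β α b c x n).2 + 1 else (shockCounts γ β α b c x n).2)) := rfl

variable (hγβ : γ < β) (hβα : ∀ k l : ℕ, β ≤ α + b k - c l)
include hγβ hβα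

lemma shock_step0 (x : ℕ → ℝ) (n j : ℕ) :
    (shockNF γ β α b c x (n+1) ∧ shockCounts γ β α b c x (n+1) = (j, 0)) ↔
      (((shockNF γ β α b c x n ∧ shockCounts γ β α b c x n = (j, 0)) ∧ x n ∈ Set.Iio γ) ∨
       (∃ j', j = j' + 1 ∧ (shockNF γ β α b c x n ∧ shockCounts γ β α b c x n = (j', 0)) ∧
          x n ∈ Set.Ico γ β)) := by
  rw [shockNF_succ, shockCounts_succ]
  obtain ⟨p, hp⟩ : ∃ p, shockCounts γ β α b c x n = p := ⟨_, rfl⟩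
  unfold fatalShock
  rw [hp]
  obtain ⟨pj, ph⟩ := p
  simp only [Set.mem_Iio, Set.mem_Ico, Prod.mk.injEq, not_le]
  constructor
  · rintro ⟨⟨hNF, hnf⟩, h1, h2⟩
    by_cases hxβ : β ≤ x n
    · rw [if_pos ⟨hxβ, hnf⟩] at h2
      exact absurd h2 (Nat.succ_ne_zero _)
    · push_neg at hxβ
      rw [if_neg (by rintro ⟨hc, _⟩; exact absurd hxβ (not_lt.2 hc))] at h2
      subst h2
      by_cases hxγ : γ ≤ x n
      · rw [if_pos ⟨hxγ, hxβ, rfl⟩] at h1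
        exact Or.inr ⟨pj, h1.symm, ⟨hNF, rfl, rfl⟩, hxγ, hxβ⟩
      · push_neg at hxγ
        rw [if_neg (by rintro ⟨hc, _⟩; exact absurd hxγ (not_lt.2 hc))] at h1
        subst h1
        exact Or.inl ⟨⟨hNF, rfl, rfl⟩, hxγ⟩
  · rintro (⟨⟨hNF, hj, hh⟩, hx⟩ | ⟨j', rfl, ⟨hNF, hj, hh⟩, hx1, hx2⟩)
    · subst hj; subst hh
      have hxβ : ¬ β ≤ x n := by push_neg; linarith
      have hxγ : ¬ (γ ≤ x n ∧ x n < β ∧ (0:ℕ) = 0) := by rintro ⟨hc, _⟩; linarith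
      have hnf : x n < α + b pj - c 0 := lt_of_lt_of_le (by linarith [hβα pj 0]) (le_refl _)
      refine ⟨⟨hNF, hnf⟩, ?_, ?_⟩
      · rw [if_neg hxγ]
      · rw [if_neg (by rintro ⟨hc, _⟩; exact hxβ hc)]
    · subst hj; subst hh
      have hnf : x n < α + b pj - c 0 := lt_of_lt_of_le hx2 (hβα pj 0)
      refine ⟨⟨hNF, hnf⟩, ?_, ?_⟩
      · rw [if_pos ⟨hx1, hx2, rfl⟩]
      · rw [if_neg (by rintro ⟨hc, _⟩; linarith)]

lemma shock_stepS (x : ℕ → ℝ) (n j h : ℕ) :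
    (shockNF γ β α b c x (n+1) ∧ shockCounts γ β α b c x (n+1) = (j, h+1)) ↔
      (((shockNF γ β α b c x n ∧ shockCounts γ β α b c x n = (j, h+1)) ∧ x n ∈ Set.Iio β) ∨
       ((shockNF γ β α b c x n ∧ shockCounts γ β α b c x n = (j, h)) ∧
          x n ∈ Set.Ico β (α + b j - c h))) := by
  rw [shockNF_succ, shockCounts_succ]
  obtain ⟨p, hp⟩ : ∃ p, shockCounts γ β α b c x n = p := ⟨_, rfl⟩
  unfold fatalShock
  rw [hp]
  obtain ⟨pj, ph⟩ := p
  simp only [Set.mem_Iio, Set.mem_Ico, Prod.mk.injEq, not_le]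
  constructor
  · rintro ⟨⟨hNF, hnf⟩, h1, h2⟩
    by_cases hxβ : β ≤ x n
    · rw [if_pos ⟨hxβ, hnf⟩] at h2
      have hph : ph = h := Nat.succ_injective h2
      rw [if_neg (by rintro ⟨_, hc, _⟩; exact absurd hxβ (not_le.2 hc))] at h1
      subst h1; subst hph
      exact Or.inr ⟨⟨hNF, rfl, rfl⟩, hxβ, hnf⟩
    · push_neg at hxβ
      rw [if_neg (by rintro ⟨hc, _⟩; exact absurd hxβ (not_lt.2 hc))] at h2
      subst h2
      have h1' : pj = j := by
        rwa [if_neg (by rintro ⟨_, _, hc⟩; exact Nat.succ_ne_zero _ hc)] at h1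
      subst h1'
      exact Or.inl ⟨⟨hNF, rfl, rfl⟩, hxβ⟩
  · rintro (⟨⟨hNF, hj, hh⟩, hx⟩ | ⟨⟨hNF, hj, hh⟩, hx1, hx2⟩)
    · subst hj; subst hh
      refine ⟨⟨hNF, lt_of_lt_of_le hx (hβα _ _)⟩, ?_, ?_⟩
      · rw [if_neg (by rintro ⟨_, _, hc⟩; exact Nat.succ_ne_zero _ hc)]
      · rw [if_neg (by rintro ⟨hc, _⟩; linarith)]
    · subst hj; subst hh
      refine ⟨⟨hNF, hx2⟩, ?_, ?_⟩
      · rw [if_neg (by rintro ⟨_, hc, _⟩; linarith)]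
      · rw [if_pos ⟨hx1, hx2⟩]

end Det

/-! ### The pre-fatal events -/

section Meas
variable {Ω : Type*} [MeasurableSpace Ω]

/-- The event that no fatal shock occurred among the first `n` shocks, and the shock
counts after `n` shocks equal `p`. -/
def shockT (X : ℕ → Ω → ℝ) (γ β α : ℝ) (b c : ℕ → ℝ) (n : ℕ) (p : ℕ × ℕ) : Set Ω :=
  {ω | shockNF γ β α b c (fun j => X j ω) n ∧ shockCounts γ β α b c (fun j => X j ω) n = p}

variable (X : ℕ → Ω → ℝ) (γ β α : ℝ) (b c : ℕ → ℝ)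

lemma shockT_zero_eq : shockT X γ β α b c 0 (0,0) = Set.univ := by
  ext ω; simp [shockT, shockNF, shockCounts]

lemma shockT_zero_ne {p : ℕ × ℕ} (hp : p ≠ (0,0)) : shockT X γ β α b c 0 p = ∅ := by
  ext ω
  simp only [shockT, Set.mem_setOf_eq, Set.mem_empty_iff_false, iff_false, not_and]
  intro _ h
  exact hp (by simpa [shockCounts] using h.symm)

variable (hγβ : γ < β) (hβα : ∀ k l : ℕ, β ≤ α + b k - c l)
include hγβ hβα

lemma shockT_succ_00 (n : ℕ) :
    shockT X γ β α b c (n+1) (0,0) =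
      (shockT X γ β α b c n (0,0) ∩ X n ⁻¹' Set.Iio γ) ∪
      (shockT X γ β α b c n (0,0) ∩ X n ⁻¹' (∅ : Set ℝ)) := by
  ext ω
  simp only [shockT, Set.mem_setOf_eq, Set.mem_union, Set.mem_inter_iff, Set.mem_preimage,
    Set.preimage_empty, Set.mem_empty_iff_false, and_false, or_false]
  rw [shock_step0 γ β α b c hγβ hβα (fun j => X j ω) n 0]
  constructor
  · rintro (h | ⟨j', hj', _⟩)
    · exact ⟨h.1, h.2⟩
    · exact absurd hj' (by omega)
  · rintro ⟨h1, h2⟩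
    exact Or.inl ⟨h1, h2⟩

lemma shockT_succ_j0 (n j : ℕ) :
    shockT X γ β α b c (n+1) (j+1,0) =
      (shockT X γ β α b c n (j+1,0) ∩ X n ⁻¹' Set.Iio γ) ∪
      (shockT X γ β α b c n (j,0) ∩ X n ⁻¹' Set.Ico γ β) := by
  ext ω
  simp only [shockT, Set.mem_setOf_eq, Set.mem_union, Set.mem_inter_iff, Set.mem_preimage]
  rw [shock_step0 γ β α b c hγβ hβα (fun j => X j ω) n (j+1)]
  constructor
  · rintro (h | ⟨j', hj', h⟩)
    · exact Or.inl ⟨h.1, h.2⟩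
    · have : j = j' := by omega
      subst this
      exact Or.inr ⟨h.1, h.2⟩
  · rintro (h | h)
    · exact Or.inl ⟨h.1, h.2⟩
    · exact Or.inr ⟨j, rfl, h.1, h.2⟩

lemma shockT_succ_S (n j h : ℕ) :
    shockT X γ β α b c (n+1) (j,h+1) =
      (shockT X γ β α b c n (j,h+1) ∩ X n ⁻¹' Set.Iio β) ∪
      (shockT X γ β α b c n (j,h) ∩ X n ⁻¹' Set.Ico β (α + b j - c h)) := by
  ext ω
  simp only [shockT, Set.mem_setOf_eq, Set.mem_union, Set.mem_inter_iff, Set.mem_preimage]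
  rw [shock_stepS γ β α b c hγβ hβα (fun j => X j ω) n j h]

end Meas

/-! ### Independence machinery -/

section Indep
variable {Ω : Type*} [MeasurableSpace Ω] (P : Measure Ω) [IsProbabilityMeasure P]
  (μ : Measure ℝ) [IsProbabilityMeasure μ]
  (X : ℕ → Ω → ℝ) (γ β α : ℝ) (b c : ℕ → ℝ)

/-- The conditional-product property at time `n`. -/
def shockGood (n : ℕ) : Prop :=
  ∀ (p : ℕ × ℕ) (S : Finset ℕ), (∀ m ∈ S, n ≤ m) → ∀ (I : ℕ → Set ℝ),
    (∀ m, MeasurableSet (I m)) →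
    P (shockT X γ β α b c n p ∩ ⋂ m ∈ S, X m ⁻¹' I m)
      = P (shockT X γ β α b c n p) * ∏ m ∈ S, μ (I m)

variable (hX : ∀ i, AEMeasurable (X i) P)
  (hpre : ∀ (i : ℕ) (s : Set ℝ), MeasurableSet s → P (X i ⁻¹' s) = μ s)
  (hrect : ∀ (S : Finset ℕ) (I : ℕ → Set ℝ), (∀ m ∈ S, MeasurableSet (I m)) →
      P (⋂ m ∈ S, X m ⁻¹' I m) = ∏ m ∈ S, P (X m ⁻¹' I m))

include hX hpre hrect

lemma shockGood_zero : shockGood P μ X γ β α b c 0 := by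
  intro p S _ I hI
  by_cases hp : p = (0,0)
  · subst hp
    rw [shockT_zero_eq, Set.univ_inter, measure_univ, one_mul,
      hrect S I (fun m _ => hI m)]
    exact Finset.prod_congr rfl fun m _ => hpre m (I m) (hI m)
  · rw [shockT_zero_ne X γ β α b c hp, Set.empty_inter, measure_empty, zero_mul]

lemma shockGood_extend {n : ℕ} (IH : shockGood P μ X γ β α b c n)
    (q : ℕ × ℕ) (R : Set ℝ) (hR : MeasurableSet R)
    (S : Finset ℕ) (hS : ∀ m ∈ S, n + 1 ≤ m) (I : ℕ → Set ℝ) (hI : ∀ m, MeasurableSet (I m)) :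
    P ((shockT X γ β α b c n q ∩ X n ⁻¹' R) ∩ ⋂ m ∈ S, X m ⁻¹' I m)
      = P (shockT X γ β α b c n q) * μ R * ∏ m ∈ S, μ (I m) := by
  classical
  have hnS : n ∉ S := fun h => by have := hS n h; omega
  have key := IH q (insert n S) (fun m hm => by
      rcases Finset.mem_insert.1 hm with h | hm
      · omega
      · exact le_of_lt (hS m hm)) (Function.update I n R)
    (fun m => by
      by_cases hm : m = n
      · subst hm; simpa [Function.update_self] using hR
      · simpa [Function.update_of_ne hm] using hI m)
  rw [Finset.set_biInter_insert, Function.update_self] at key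
  have hIeq : ⋂ m ∈ S, X m ⁻¹' Function.update I n R m = ⋂ m ∈ S, X m ⁻¹' I m := by
    apply Set.iInter₂_congr
    intro m hm
    rw [Function.update_of_ne (by rintro rfl; exact hnS hm)]
  rw [hIeq] at key
  rw [Set.inter_assoc]
  rw [key, Finset.prod_insert hnS, Function.update_self]
  have : ∏ m ∈ S, μ (Function.update I n R m) = ∏ m ∈ S, μ (I m) := by
    apply Finset.prod_congr rfl
    intro m hm
    rw [Function.update_of_ne (by rintro rfl; exact hnS hm)]
  rw [this, mul_assoc]

end Indep

section Indep2
variable {Ω : Type*} [MeasurableSpace Ω] (P : Measure Ω) [IsProbabilityMeasure P]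
  (μ : Measure ℝ) [IsProbabilityMeasure μ]
  (X : ℕ → Ω → ℝ) (γ β α : ℝ) (b c : ℕ → ℝ)
  (hγβ : γ < β) (hβα : ∀ k l : ℕ, β ≤ α + b k - c l)
  (hX : ∀ i, AEMeasurable (X i) P)
  (hpre : ∀ (i : ℕ) (s : Set ℝ), MeasurableSet s → P (X i ⁻¹' s) = μ s)
  (hrect : ∀ (S : Finset ℕ) (I : ℕ → Set ℝ), (∀ m ∈ S, MeasurableSet (I m)) →
      P (⋂ m ∈ S, X m ⁻¹' I m) = ∏ m ∈ S, P (X m ⁻¹' I m))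

include hγβ hβα hX hpre hrect

lemma shockT_nullMeasurable : ∀ n p, NullMeasurableSet (shockT X γ β α b c n p) P := by
  intro n
  induction n with
  | zero =>
    intro p
    by_cases hp : p = (0,0)
    · subst hp; rw [shockT_zero_eq]; exact MeasurableSet.univ.nullMeasurableSet
    · rw [shockT_zero_ne X γ β α b c hp]; exact MeasurableSet.empty.nullMeasurableSet
  | succ n IH =>
    rintro ⟨j, h⟩
    have hpre1 : ∀ (R : Set ℝ), MeasurableSet R → NullMeasurableSet (X n ⁻¹' R) P :=
      fun R hR => (hX n).nullMeasurable hR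
    cases h with
    | zero =>
      cases j with
      | zero =>
        rw [shockT_succ_00 X γ β α b c hγβ hβα n]
        exact ((IH _).inter (hpre1 _ measurableSet_Iio)).union
          ((IH _).inter (hpre1 _ MeasurableSet.empty))
      | succ j =>
        rw [shockT_succ_j0 X γ β α b c hγβ hβα n j]
        exact ((IH _).inter (hpre1 _ measurableSet_Iio)).union
          ((IH _).inter (hpre1 _ measurableSet_Ico))
    | succ h =>
      rw [shockT_succ_S X γ β α b c hγβ hβα n j h]
      exact ((IH _).inter (hpre1 _ measurableSet_Iio)).union
        ((IH _).inter (hpre1 _ measurableSet_Ico))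

lemma shockGood_union {n : ℕ} (IH : shockGood P μ X γ β α b c n)
    (p q₁ q₂ : ℕ × ℕ) (R₁ R₂ : Set ℝ) (hR₁ : MeasurableSet R₁) (hR₂ : MeasurableSet R₂)
    (hdisj : Disjoint R₁ R₂)
    (hset : shockT X γ β α b c (n+1) p =
      (shockT X γ β α b c n q₁ ∩ X n ⁻¹' R₁) ∪ (shockT X γ β α b c n q₂ ∩ X n ⁻¹' R₂))
    (S : Finset ℕ) (hS : ∀ m ∈ S, n + 1 ≤ m) (I : ℕ → Set ℝ) (hI : ∀ m, MeasurableSet (I m)) :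
    P (shockT X γ β α b c (n+1) p ∩ ⋂ m ∈ S, X m ⁻¹' I m)
      = P (shockT X γ β α b c (n+1) p) * ∏ m ∈ S, μ (I m) := by
  have hTnull := shockT_nullMeasurable P μ X γ β α b c hγβ hβα hX hpre hrect
  have hInull : NullMeasurableSet (⋂ m ∈ S, X m ⁻¹' I m) P :=
    NullMeasurableSet.biInter S.countable_toSet
      (fun m _ => (hX m).nullMeasurable (hI m))
  have hdisj' : Disjoint (shockT X γ β α b c n q₁ ∩ X n ⁻¹' R₁)
      (shockT X γ β α b c n q₂ ∩ X n ⁻¹' R₂) :=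
    Disjoint.mono Set.inter_subset_right Set.inter_subset_right
      (hdisj.preimage (X n))
  have hB₂ : NullMeasurableSet (shockT X γ β α b c n q₂ ∩ X n ⁻¹' R₂) P :=
    (hTnull n q₂).inter ((hX n).nullMeasurable hR₂)
  have hsplit : ∀ (T : Set Ω), NullMeasurableSet T P →
      P (shockT X γ β α b c (n+1) p ∩ T)
        = P ((shockT X γ β α b c n q₁ ∩ X n ⁻¹' R₁) ∩ T)
          + P ((shockT X γ β α b c n q₂ ∩ X n ⁻¹' R₂) ∩ T) := by
    intro T hT
    rw [hset, Set.union_inter_distrib_right]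
    exact measure_union₀ (hB₂.inter hT)
      ((hdisj'.mono Set.inter_subset_left Set.inter_subset_left).aedisjoint)
  have e₁ := shockGood_extend P μ X γ β α b c hX hpre hrect IH q₁ R₁ hR₁ S hS I hI
  have e₂ := shockGood_extend P μ X γ β α b c hX hpre hrect IH q₂ R₂ hR₂ S hS I hI
  have u₁ : P (shockT X γ β α b c n q₁ ∩ X n ⁻¹' R₁)
      = P (shockT X γ β α b c n q₁) * μ R₁ := by
    have := shockGood_extend P μ X γ β α b c hX hpre hrect IH q₁ R₁ hR₁ ∅ (by simp) I hI
    simpa using this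
  have u₂ : P (shockT X γ β α b c n q₂ ∩ X n ⁻¹' R₂)
      = P (shockT X γ β α b c n q₂) * μ R₂ := by
    have := shockGood_extend P μ X γ β α b c hX hpre hrect IH q₂ R₂ hR₂ ∅ (by simp) I hI
    simpa using this
  rw [hsplit _ hInull, e₁, e₂]
  have hP : P (shockT X γ β α b c (n+1) p)
      = P (shockT X γ β α b c n q₁) * μ R₁ + P (shockT X γ β α b c n q₂) * μ R₂ := by
    have := hsplit Set.univ MeasurableSet.univ.nullMeasurableSet
    simpa [u₁, u₂] using this
  rw [hP, add_mul]

lemma shockGood_all : ∀ n, shockGood P μ X γ β α b c n := by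
  intro n
  induction n with
  | zero => exact shockGood_zero P μ X γ β α b c hX hpre hrect
  | succ n IH =>
    rintro ⟨j, h⟩ S hS I hI
    cases h with
    | zero =>
      cases j with
      | zero =>
        exact shockGood_union P μ X γ β α b c hγβ hβα hX hpre hrect IH _ _ _ _ _
          measurableSet_Iio MeasurableSet.empty (by simp)
          (shockT_succ_00 X γ β α b c hγβ hβα n) S hS I hI
      | succ j =>
        exact shockGood_union P μ X γ β α b c hγβ hβα hX hpre hrect IH _ _ _ _ _
          measurableSet_Iio measurableSet_Ico
          (by rw [Set.disjoint_left]; intro x hx hx'; exact absurd hx'.1 (not_le.2 hx))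
          (shockT_succ_j0 X γ β α b c hγβ hβα n j) S hS I hI
    | succ h =>
      exact shockGood_union P μ X γ β α b c hγβ hβα hX hpre hrect IH _ _ _ _ _
        measurableSet_Iio measurableSet_Ico
        (by rw [Set.disjoint_left]; intro x hx hx'; exact absurd hx'.1 (not_le.2 hx))
        (shockT_succ_S X γ β α b c hγβ hβα n j h) S hS I hI

/-- Multiplication rule: `P (T n p ∩ Xn⁻¹ R) = P (T n p) * μ R`. -/
lemma shockT_mul (n : ℕ) (p : ℕ × ℕ) (R : Set ℝ) (hR : MeasurableSet R) :
    P (shockT X γ β α b c n p ∩ X n ⁻¹' R) = P (shockT X γ β α b c n p) * μ R := by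
  have := shockGood_all P μ X γ β α b c hγβ hβα hX hpre hrect n p {n}
    (by intro m hm; simp at hm; omega) (fun _ => R) (fun _ => hR)
  simpa [Finset.set_biInter_singleton] using this

lemma shockU_rec00 (n : ℕ) :
    P (shockT X γ β α b c (n+1) (0,0)) = P (shockT X γ β α b c n (0,0)) * μ (Set.Iio γ) := by
  rw [shockT_succ_00 X γ β α b c hγβ hβα n, Set.preimage_empty, Set.inter_empty,
    Set.union_empty,
    shockT_mul P μ X γ β α b c hγβ hβα hX hpre hrect n (0,0) _ measurableSet_Iio]

lemma shockU_two_piece (n : ℕ) (p q₁ q₂ : ℕ × ℕ) (R₁ R₂ : Set ℝ)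
    (hR₁ : MeasurableSet R₁) (hR₂ : MeasurableSet R₂) (hd : Disjoint R₁ R₂)
    (hset : shockT X γ β α b c (n+1) p =
      (shockT X γ β α b c n q₁ ∩ X n ⁻¹' R₁) ∪ (shockT X γ β α b c n q₂ ∩ X n ⁻¹' R₂)) :
    P (shockT X γ β α b c (n+1) p)
      = P (shockT X γ β α b c n q₁) * μ R₁ + P (shockT X γ β α b c n q₂) * μ R₂ := by
  rw [hset, measure_union₀
    ((shockT_nullMeasurable P μ X γ β α b c hγβ hβα hX hpre hrect n q₂).inter
      ((hX n).nullMeasurable hR₂))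
    ((Disjoint.mono Set.inter_subset_right Set.inter_subset_right
      (hd.preimage (X n))).aedisjoint),
    shockT_mul P μ X γ β α b c hγβ hβα hX hpre hrect n q₁ _ hR₁,
    shockT_mul P μ X γ β α b c hγβ hβα hX hpre hrect n q₂ _ hR₂]

lemma shockU_recj0 (n j : ℕ) :
    P (shockT X γ β α b c (n+1) (j+1,0))
      = P (shockT X γ β α b c n (j+1,0)) * μ (Set.Iio γ)
        + P (shockT X γ β α b c n (j,0)) * μ (Set.Ico γ β) :=
  shockU_two_piece P μ X γ β α b c hγβ hβα hX hpre hrect n _ _ _ _ _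
    measurableSet_Iio measurableSet_Ico
    (by rw [Set.disjoint_left]; rintro x hx ⟨h1, _⟩; exact absurd h1 (not_le.2 hx))
    (shockT_succ_j0 X γ β α b c hγβ hβα n j)

lemma shockU_recS (n j h : ℕ) :
    P (shockT X γ β α b c (n+1) (j,h+1))
      = P (shockT X γ β α b c n (j,h+1)) * μ (Set.Iio β)
        + P (shockT X γ β α b c n (j,h)) * μ (Set.Ico β (α + b j - c h)) :=
  shockU_two_piece P μ X γ β α b c hγβ hβα hX hpre hrect n _ _ _ _ _
    measurableSet_Iio measurableSet_Ico
    (by rw [Set.disjoint_left]; rintro x hx ⟨h1, _⟩; exact absurd h1 (not_le.2 hx))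
    (shockT_succ_S X γ β α b c hγβ hβα n j h)

end Indep2

/-! ### Summation machinery in `ℝ≥0∞` -/

open scoped ENNReal in
lemma ennreal_solve_le {x c a : ℝ≥0∞} (hx : x ≠ ∞) (ha : a < 1) (h : x ≤ c + x * a) :
    x ≤ c * (1 - a)⁻¹ := by
  have h1 : x - x * a ≤ c := tsub_le_iff_right.2 h
  have h2 : x * (1 - a) = x - x * a := by
    rw [ENNReal.mul_sub (fun _ _ => hx), mul_one]
  have h3 : x * (1 - a) ≤ c := h2 ▸ h1
  have h0 : (1 : ℝ≥0∞) - a ≠ 0 := by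
    simp only [ne_eq, tsub_eq_zero_iff_le, not_le]; exact ha
  have hne : (1 : ℝ≥0∞) - a ≠ ∞ := ne_top_of_le_ne_top ENNReal.one_ne_top tsub_le_self
  calc x ≤ c / (1 - a) := (ENNReal.le_div_iff_mul_le (Or.inl h0) (Or.inl hne)).2 h3
    _ = c * (1 - a)⁻¹ := by rw [ENNReal.div_eq_inv_mul, mul_comm]

open scoped ENNReal in
lemma ennreal_chain {a w : ℝ≥0∞} (ha : a < 1) (hw : w ≠ ∞) (f v : ℕ → ℝ≥0∞)
    (hfb : ∀ n, f n ≤ 1) (hV : ∑' n, v n ≠ ∞)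
    (hrec : ∀ n, f (n+1) = f n * a + v n * w) :
    (∑' n, f n) = (f 0 + (∑' n, v n) * w) * (1 - a)⁻¹ ∧ (∑' n, f n) ≠ ∞ := by
  set V := ∑' n, v n with hVdef
  set C := f 0 + V * w with hC
  have hCne : C ≠ ∞ := by
    refine ENNReal.add_ne_top.2 ⟨?_, ENNReal.mul_ne_top hV hw⟩
    exact ne_top_of_le_ne_top ENNReal.one_ne_top (hfb 0)
  have hbound : ∀ N : ℕ, ∑ i ∈ Finset.range N, f i ≤ C * (1 - a)⁻¹ := by
    intro N
    set F := ∑ i ∈ Finset.range N, f i with hF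
    have hFne : F ≠ ∞ := by
      refine ne_top_of_le_ne_top (?_ : (N : ℝ≥0∞) ≠ ∞) ?_
      · exact ENNReal.natCast_ne_top N
      · calc F ≤ ∑ _i ∈ Finset.range N, 1 := Finset.sum_le_sum (fun i _ => hfb i)
          _ = N := by simp
    refine ennreal_solve_le hFne ha ?_
    have step : F ≤ ∑ i ∈ Finset.range (N+1), f i :=
      Finset.sum_le_sum_of_subset (Finset.range_subset_range.2 (Nat.le_succ N))
    have expand : ∑ i ∈ Finset.range (N+1), f i
        = f 0 + ((∑ i ∈ Finset.range N, f i) * a + (∑ i ∈ Finset.range N, v i) * w) := by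
      rw [Finset.sum_range_succ']
      simp_rw [hrec]
      rw [Finset.sum_add_distrib, ← Finset.sum_mul, ← Finset.sum_mul]
      ring
    refine step.trans ?_
    rw [expand]
    calc f 0 + ((∑ i ∈ Finset.range N, f i) * a + (∑ i ∈ Finset.range N, v i) * w)
        ≤ f 0 + (F * a + V * w) := by gcongr <;> exact ENNReal.sum_le_tsum _
      _ = C + F * a := by rw [hC]; ring
  have hUle : ∑' n, f n ≤ C * (1 - a)⁻¹ := by
    rw [ENNReal.tsum_eq_iSup_sum]
    refine iSup_le fun s => ?_
    refine le_trans (Finset.sum_le_sum_of_subset ?_) (hbound (s.sup id + 1))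
    intro i hi
    simp only [Finset.mem_range]
    exact Nat.lt_succ_of_le (Finset.le_sup (f := id) hi)
  have hUne : ∑' n, f n ≠ ∞ := by
    refine ne_top_of_le_ne_top ?_ hUle
    exact ENNReal.mul_ne_top hCne (ENNReal.inv_ne_top.2 (by
      simp only [ne_eq, tsub_eq_zero_iff_le, not_le]; exact ha))
  have heq : ∑' n, f n = C + (∑' n, f n) * a := by
    conv_lhs => rw [tsum_eq_zero_add' ENNReal.summable]
    simp_rw [hrec]
    rw [ENNReal.tsum_add, ENNReal.tsum_mul_right, ENNReal.tsum_mul_right, ← hVdef, hC]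
    ring
  set U := ∑' n, f n with hU
  have hUa : U * a ≠ ∞ := ENNReal.mul_ne_top hUne (ne_top_of_le_ne_top ENNReal.one_ne_top ha.le)
  have hsub : U - U * a = C := ENNReal.sub_eq_of_eq_add hUa heq
  have hmul : U * (1 - a) = C := by
    rw [ENNReal.mul_sub (fun _ _ => hUne), mul_one, hsub]
  have h0 : (1 : ℝ≥0∞) - a ≠ 0 := by
    simp only [ne_eq, tsub_eq_zero_iff_le, not_le]; exact ha
  have hne : (1 : ℝ≥0∞) - a ≠ ∞ := ne_top_of_le_ne_top ENNReal.one_ne_top tsub_le_self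
  refine ⟨?_, hUne⟩
  calc U = U * ((1 - a) * (1 - a)⁻¹) := by rw [ENNReal.mul_inv_cancel h0 hne, mul_one]
    _ = (U * (1 - a)) * (1 - a)⁻¹ := by ring
    _ = C * (1 - a)⁻¹ := by rw [hmul]

/-! ### Closed form for the sums -/

section Values
open scoped ENNReal
variable (μ : Measure ℝ) [IsProbabilityMeasure μ]

lemma measure_Iio_add_Ici (x : ℝ) : μ (Set.Iio x) + μ (Set.Ici x) = 1 := by
  rw [← measure_union (Set.Iio_disjoint_Ici le_rfl) measurableSet_Ici,
    Set.Iio_union_Ici, measure_univ]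

lemma one_sub_measure_Iio (x : ℝ) : 1 - μ (Set.Iio x) = μ (Set.Ici x) :=
  ENNReal.sub_eq_of_eq_add (measure_ne_top μ _)
    (by rw [← measure_Iio_add_Ici μ x, add_comm])

lemma measure_Iio_lt_one (x : ℝ) (hx : μ (Set.Ici x) ≠ 0) : μ (Set.Iio x) < 1 := by
  calc μ (Set.Iio x) < μ (Set.Iio x) + μ (Set.Ici x) :=
        ENNReal.lt_add_right (measure_ne_top μ _) hx
    _ = 1 := measure_Iio_add_Ici μ x

variable (u : ℕ → ℕ × ℕ → ℝ≥0∞) (γ β α : ℝ) (b c : ℕ → ℝ)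
  (hub : ∀ n p, u n p ≤ 1)
  (hu000 : u 0 (0,0) = 1)
  (hu0 : ∀ p : ℕ × ℕ, p ≠ (0,0) → u 0 p = 0)
  (hrec00 : ∀ n, u (n+1) (0,0) = u n (0,0) * μ (Set.Iio γ))
  (hrecj0 : ∀ n j, u (n+1) (j+1,0)
      = u n (j+1,0) * μ (Set.Iio γ) + u n (j,0) * μ (Set.Ico γ β))
  (hrecS : ∀ n j h, u (n+1) (j,h+1)
      = u n (j,h+1) * μ (Set.Iio β) + u n (j,h) * μ (Set.Ico β (α + b j - c h)))

include hub hu000 hu0 hrec00 hrecj0 in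
lemma shockU_row (hγ0 : μ (Set.Ici γ) ≠ 0) :
    ∀ j, (∑' n, u n (j,0))
        = (μ (Set.Ico γ β))^j * ((μ (Set.Ici γ))⁻¹)^(j+1) ∧ (∑' n, u n (j,0)) ≠ ∞ := by
  have haγ : μ (Set.Iio γ) < 1 := measure_Iio_lt_one μ γ hγ0
  intro j
  induction j with
  | zero =>
    have := ennreal_chain haγ (ENNReal.zero_ne_top) (fun n => u n (0,0)) (fun _ => 0)
      (fun n => hub n _) (by simp)
      (fun n => by rw [hrec00 n]; simp)
    rw [hu000] at this
    simpa [one_sub_measure_Iio μ γ] using this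
  | succ j IH =>
    have := ennreal_chain haγ (measure_ne_top μ _) (fun n => u n (j+1,0)) (fun n => u n (j,0))
      (fun n => hub n _) IH.2
      (fun n => hrecj0 n j)
    rw [hu0 (j+1,0) (by simp), IH.1, one_sub_measure_Iio μ γ] at this
    refine ⟨?_, this.2⟩
    rw [this.1]
    ring

include hub hu000 hu0 hrec00 hrecj0 hrecS in
lemma shockU_val (hγ0 : μ (Set.Ici γ) ≠ 0) (hβ0 : μ (Set.Ici β) ≠ 0) (k : ℕ) :
    ∀ l, (∑' n, u n (k,l))
        = (μ (Set.Ico γ β))^k * ((μ (Set.Ici γ))⁻¹)^(k+1)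
            * ∏ h ∈ Finset.range l, (μ (Set.Ico β (α + b k - c h)) * (μ (Set.Ici β))⁻¹)
      ∧ (∑' n, u n (k,l)) ≠ ∞ := by
  have haβ : μ (Set.Iio β) < 1 := measure_Iio_lt_one μ β hβ0
  intro l
  induction l with
  | zero =>
    simpa using shockU_row μ u γ β hub hu000 hu0 hrec00 hrecj0 hγ0 k
  | succ l IH =>
    have := ennreal_chain haβ (measure_ne_top μ _) (fun n => u n (k,l+1)) (fun n => u n (k,l))
      (fun n => hub n _) IH.2
      (fun n => hrecS n k l)
    rw [hu0 (k,l+1) (by simp), IH.1, one_sub_measure_Iio μ β] at this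
    refine ⟨?_, this.2⟩
    rw [this.1, Finset.prod_range_succ]
    ring

end Values

/-! ### Main theorem -/

/-- exact joint distribution of `(N₊(ν), N₋(ν))`, case `l ≥ 1`:
`P{N₊(ν)=k, N₋(ν)=l} = (1 - F̄(β)/F̄(γ))^k ∏_{h<l} (1 - F̄(α_{k,h})/F̄(β)) ⬝ F̄(α_{k,l})/F̄(γ)`. -/
theorem shock_joint_exact_pos
    {Ω : Type*} [MeasurableSpace Ω] (P : Measure Ω) [IsProbabilityMeasure P]
    (μ : Measure ℝ) [IsProbabilityMeasure μ]
    (X : ℕ → Ω → ℝ)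
    (hindep : iIndepFun X P)
    (hdist : ∀ i, Measure.map (X i) P = μ)
    (hcont : ∀ x : ℝ, μ {x} = 0)
    (γ β α : ℝ) (b c : ℕ → ℝ)
    (hγβ : γ < β)
    (hb : Monotone b) (hc : Monotone c) (hb0 : b 0 = 0) (hc0 : c 0 = 0)
    (hβα : ∀ k l : ℕ, β ≤ α + b k - c l)
    (hγpos : 0 < survival μ γ)
    (k l : ℕ) (hl : 1 ≤ l) :
    (P {ω | (∃ i, fatalShock γ β α b c (fun j => X j ω) i) ∧
        (shockCounts γ β α b c (fun j => X j ω)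
          (nuShock γ β α b c (fun j => X j ω))) = (k, l)}).toReal
      = (1 - survival μ β / survival μ γ) ^ k
        * (∏ h ∈ Finset.range l, (1 - survival μ (α + b k - c h) / survival μ β))
        * (survival μ (α + b k - c l) / survival μ γ) := by
  classical
  -- measurability and distribution facts
  have hX : ∀ i, AEMeasurable (X i) P := by
    intro i
    by_contra h
    have h0 := hdist i
    rw [Measure.map_of_not_aemeasurable h] at h0
    have : (0 : Measure ℝ) Set.univ = μ Set.univ := by rw [h0]
    simp [measure_univ] at this
  have hpre : ∀ (i : ℕ) (s : Set ℝ), MeasurableSet s → P (X i ⁻¹' s) = μ s := by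
    intro i s hs
    rw [← hdist i, Measure.map_apply_of_aemeasurable (hX i) hs]
  have hrect : ∀ (S : Finset ℕ) (I : ℕ → Set ℝ), (∀ m ∈ S, MeasurableSet (I m)) →
      P (⋂ m ∈ S, X m ⁻¹' I m) = ∏ m ∈ S, P (X m ⁻¹' I m) := by
    intro S I hI
    have := (iIndepFun_iff_measure_inter_preimage_eq_mul.1 hindep) S hI
    exact this
  have hIoiIci : ∀ x : ℝ, μ (Set.Ici x) = μ (Set.Ioi x) := by
    intro x
    refine le_antisymm ?_ (measure_mono Set.Ioi_subset_Ici_self)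
    calc μ (Set.Ici x) = μ (insert x (Set.Ioi x)) := by rw [Set.Ioi_insert]
      _ ≤ μ {x} + μ (Set.Ioi x) := by
          rw [Set.insert_eq]; exact measure_union_le _ _
      _ = μ (Set.Ioi x) := by rw [hcont x, zero_add]
  have hsurv : ∀ x : ℝ, survival μ x = (μ (Set.Ici x)).toReal := by
    intro x; rw [survival, hIoiIci]
  -- the event as a disjoint union
  have hEvent : {ω | (∃ i, fatalShock γ β α b c (fun j => X j ω) i) ∧
        (shockCounts γ β α b c (fun j => X j ω)
          (nuShock γ β α b c (fun j => X j ω))) = (k, l)}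
      = ⋃ n, (shockT X γ β α b c n (k,l) ∩ X n ⁻¹' Set.Ici (α + b k - c l)) := by
    ext ω
    simp only [Set.mem_setOf_eq, Set.mem_iUnion, Set.mem_inter_iff, Set.mem_preimage,
      Set.mem_Ici, shockT, shockNF]
    constructor
    · rintro ⟨⟨i, hi⟩, hcount⟩
      refine ⟨nuShock γ β α b c (fun j => X j ω), ⟨⟨?_, hcount⟩, ?_⟩⟩
      · intro m hm
        exact Nat.notMem_of_lt_sInf hm
      · have hmem : fatalShock γ β α b c (fun j => X j ω)
            (nuShock γ β α b c (fun j => X j ω)) := by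
          have hne : {i | fatalShock γ β α b c (fun j => X j ω) i}.Nonempty := ⟨i, hi⟩
          exact Nat.sInf_mem hne
        unfold fatalShock at hmem
        rwa [hcount] at hmem
    · rintro ⟨n, ⟨hNF, hcount⟩, hXn⟩
      have hfatal : fatalShock γ β α b c (fun j => X j ω) n := by
        unfold fatalShock; rw [hcount]; exact hXn
      have hnu : nuShock γ β α b c (fun j => X j ω) = n := by
        refine le_antisymm (Nat.sInf_le hfatal) ?_
        by_contra hlt
        push_neg at hlt
        have hne : {i | fatalShock γ β α b c (fun j => X j ω) i}.Nonempty := ⟨n, hfatal⟩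
        exact hNF _ hlt (Nat.sInf_mem hne)
      exact ⟨⟨n, hfatal⟩, by rw [hnu]; exact hcount⟩
  have hA : ∀ n, (fun n => shockT X γ β α b c n (k,l) ∩ X n ⁻¹' Set.Ici (α + b k - c l)) n
      = shockT X γ β α b c n (k,l) ∩ X n ⁻¹' Set.Ici (α + b k - c l) := fun n => rfl
  let A : ℕ → Set Ω :=
    fun n => shockT X γ β α b c n (k,l) ∩ X n ⁻¹' Set.Ici (α + b k - c l)
  have hAfatal : ∀ n ω, ω ∈ A n → fatalShock γ β α b c (fun j => X j ω) n := by
    intro n ω hω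
    obtain ⟨⟨hNF, hcount⟩, hXn⟩ := hω
    unfold fatalShock
    rw [hcount]
    exact hXn
  have hdisjA : Pairwise (Function.onFun Disjoint A) := by
    have key : ∀ m n, m < n → Disjoint (A m) (A n) := by
      intro m n hmn
      rw [Set.disjoint_left]
      intro ω hm hn
      exact hn.1.1 m hmn (hAfatal m ω hm)
    intro m n hmn
    rcases hmn.lt_or_gt with h | h
    · exact key m n h
    · exact (key n m h).symm
  have hnullA : ∀ n, NullMeasurableSet (A n) P :=
    fun n => (shockT_nullMeasurable P μ X γ β α b c hγβ hβα hX hpre hrect n (k,l)).inter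
      ((hX n).nullMeasurable measurableSet_Ici)
  have hPE : P (⋃ n, A n) = ∑' n, P (A n) :=
    measure_iUnion₀ (fun m n hmn => (hdisjA hmn).aedisjoint) hnullA
  have hPA : ∀ n, P (A n)
      = P (shockT X γ β α b c n (k,l)) * μ (Set.Ici (α + b k - c l)) :=
    fun n => shockT_mul P μ X γ β α b c hγβ hβα hX hpre hrect n (k,l) _ measurableSet_Ici
  have hLHS : P {ω | (∃ i, fatalShock γ β α b c (fun j => X j ω) i) ∧
        (shockCounts γ β α b c (fun j => X j ω)
          (nuShock γ β α b c (fun j => X j ω))) = (k, l)}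
      = (∑' n, P (shockT X γ β α b c n (k,l))) * μ (Set.Ici (α + b k - c l)) := by
    rw [hEvent]
    rw [show (⋃ n, (shockT X γ β α b c n (k,l) ∩ X n ⁻¹' Set.Ici (α + b k - c l)))
      = ⋃ n, A n from rfl, hPE]
    rw [tsum_congr hPA, ENNReal.tsum_mul_right]
  rw [hLHS]
  -- degenerate case : `F̄(β) = 0`
  by_cases hβ0 : μ (Set.Ici β) = 0
  · have hAl : μ (Set.Ici (α + b k - c l)) = 0 :=
      le_antisymm (le_trans (measure_mono (Set.Ici_subset_Ici.2 (hβα k l))) hβ0.le) (zero_le (a := μ (Set.Ici (α + b k - c l))))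
    have hsurvl : survival μ (α + b k - c l) = 0 := by
      rw [hsurv, hAl]; simp
    rw [hAl, mul_zero, hsurvl]
    simp
  -- main case
  have hγ0 : μ (Set.Ici γ) ≠ 0 := by
    intro h0
    rw [hsurv, h0] at hγpos
    simp at hγpos
  have hval := shockU_val μ (fun n p => P (shockT X γ β α b c n p)) γ β α b c
    (fun n p => prob_le_one)
    (by show P (shockT X γ β α b c 0 (0,0)) = 1
        rw [shockT_zero_eq]; exact measure_univ)
    (fun p hp => by
        show P (shockT X γ β α b c 0 p) = 0
        rw [shockT_zero_ne X γ β α b c hp]; exact measure_empty)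
    (fun n => shockU_rec00 P μ X γ β α b c hγβ hβα hX hpre hrect n)
    (fun n j => shockU_recj0 P μ X γ β α b c hγβ hβα hX hpre hrect n j)
    (fun n j h => shockU_recS P μ X γ β α b c hγβ hβα hX hpre hrect n j h)
    hγ0 hβ0 k l
  rw [hval.1]
  -- pass to real numbers
  have hfin : ∀ (s : Set ℝ), μ s ≠ ⊤ := fun s => measure_ne_top μ s
  have hinvγ : (μ (Set.Ici γ))⁻¹ ≠ ⊤ := ENNReal.inv_ne_top.2 hγ0
  have hinvβ : (μ (Set.Ici β))⁻¹ ≠ ⊤ := ENNReal.inv_ne_top.2 hβ0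
  rw [ENNReal.toReal_mul, ENNReal.toReal_mul, ENNReal.toReal_mul, ENNReal.toReal_pow,
    ENNReal.toReal_pow, ENNReal.toReal_prod, ENNReal.toReal_inv]
  simp_rw [ENNReal.toReal_mul, ENNReal.toReal_inv]
  have hgpos : 0 < (μ (Set.Ici γ)).toReal := ENNReal.toReal_pos hγ0 (hfin _)
  have hgbpos : 0 < (μ (Set.Ici β)).toReal := ENNReal.toReal_pos hβ0 (hfin _)
  have hsrval : (μ (Set.Ico γ β)).toReal
      = (μ (Set.Ici γ)).toReal - (μ (Set.Ici β)).toReal := by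
    have hIco : Set.Ico γ β = Set.Ici γ \ Set.Ici β := by
      ext x; simp only [Set.mem_Ico, Set.mem_diff, Set.mem_Ici, not_le]
    rw [hIco, measure_diff (Set.Ici_subset_Ici.2 hγβ.le)
      measurableSet_Ici.nullMeasurableSet (hfin _),
      ENNReal.toReal_sub_of_le (measure_mono (Set.Ici_subset_Ici.2 hγβ.le)) (hfin _)]
  have hwrval : ∀ h : ℕ, (μ (Set.Ico β (α + b k - c h))).toReal
      = (μ (Set.Ici β)).toReal - (μ (Set.Ici (α + b k - c h))).toReal := by
    intro h
    have hIco : Set.Ico β (α + b k - c h) = Set.Ici β \ Set.Ici (α + b k - c h) := by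
      ext x; simp only [Set.mem_Ico, Set.mem_diff, Set.mem_Ici, not_le]
    rw [hIco, measure_diff (Set.Ici_subset_Ici.2 (hβα k h))
      measurableSet_Ici.nullMeasurableSet (hfin _),
      ENNReal.toReal_sub_of_le (measure_mono (Set.Ici_subset_Ici.2 (hβα k h))) (hfin _)]
  have fact : ∀ (x y : ℝ), 0 < y → 1 - x / y = (y - x) * y⁻¹ := by
    intro x y hy
    field_simp
  simp_rw [hsurv]
  have hprod : ∏ h ∈ Finset.range l,
        (1 - (μ (Set.Ici (α + b k - c h))).toReal / (μ (Set.Ici β)).toReal)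
      = ∏ h ∈ Finset.range l,
        ((μ (Set.Ico β (α + b k - c h))).toReal * ((μ (Set.Ici β)).toReal)⁻¹) := by
    refine Finset.prod_congr rfl fun h _ => ?_
    rw [fact _ _ hgbpos, hwrval h]
  rw [hprod]
  rw [fact _ _ hgpos, ← hsrval]
  rw [div_eq_mul_inv]
  ring
end

section
/- Under the same setup, for k ≥ 0 and l = 0, P{N_+(ν) = k, N_-(ν) = 0} = [1 − F̄(β)/F̄(γ)]^k · F̄(α_{k,0})/F̄(γ). -/
open MeasureTheory ProbabilityTheory Filter Set

open scoped Classical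

section Aux

variable (γ β α : ℝ) (b c : ℕ → ℝ)

lemma shockCounts_counting (x : ℕ → ℝ) :
    ∀ j, (∀ i, i < j → x i < β) →
      shockCounts γ β α b c x j = (((Finset.range j).filter (fun i => γ ≤ x i)).card, 0)
  | 0, _ => by simp [shockCounts]
  | j + 1, h => by
      have IH := shockCounts_counting x j (fun i hi => h i (Nat.lt_succ_of_lt hi))
      have hxj : x j < β := h j (Nat.lt_succ_self j)
      simp only [shockCounts, IH, Finset.range_add_one, Finset.filter_insert]
      by_cases hγ : γ ≤ x j
      · rw [if_pos ⟨hγ, hxj, trivial⟩, if_neg (fun hh => absurd hh.1 (not_le.mpr hxj)),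
          if_pos hγ, Finset.card_insert_of_notMem (by simp)]
      · rw [if_neg (fun hh => hγ hh.1), if_neg (fun hh => absurd hh.1 (not_le.mpr hxj)),
          if_neg hγ]

lemma shockCounts_snd_mono (x : ℕ → ℝ) :
    Monotone fun j => (shockCounts γ β α b c x j).2 := by
  apply monotone_nat_of_le_succ
  intro j
  simp only [shockCounts]
  split <;> simp

def goodConfig (k : ℕ) (x : ℕ → ℝ) (n : ℕ) (S : Finset ℕ) : Prop :=
  S ∈ Finset.powersetCard k (Finset.range n) ∧
  (∀ i ∈ S, γ ≤ x i ∧ x i < β) ∧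
  (∀ i ∈ Finset.range n, i ∉ S → x i < γ) ∧
  α + b k - c 0 ≤ x n

variable {γ β α b c}

lemma goodConfig_spec (hγβ : γ < β) (hβα : ∀ k l : ℕ, β ≤ α + b k - c l)
    {k : ℕ} {x : ℕ → ℝ} {n : ℕ} {S : Finset ℕ}
    (h : goodConfig γ β α b c k x n S) :
    fatalShock γ β α b c x n ∧ nuShock γ β α b c x = n ∧
    shockCounts γ β α b c x n = (k, 0) ∧
    S = (Finset.range n).filter (fun i => γ ≤ x i) := by
  obtain ⟨hS, hmem, hout, hxn⟩ := h
  rw [Finset.mem_powersetCard] at hS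
  obtain ⟨hsub, hcard⟩ := hS
  have hlt : ∀ i, i < n → x i < β := by
    intro i hi
    by_cases hiS : i ∈ S
    · exact (hmem i hiS).2
    · exact lt_trans (hout i (Finset.mem_range.mpr hi) hiS) hγβ
  have hfilter : (Finset.range n).filter (fun i => γ ≤ x i) = S := by
    ext i
    simp only [Finset.mem_filter, Finset.mem_range]
    constructor
    · rintro ⟨hi, hγi⟩
      by_contra hiS
      exact absurd hγi (not_le.mpr (hout i (Finset.mem_range.mpr hi) hiS))
    · intro hiS
      exact ⟨Finset.mem_range.mp (hsub hiS), (hmem i hiS).1⟩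
  have hcounts : shockCounts γ β α b c x n = (k, 0) := by
    rw [shockCounts_counting γ β α b c x n hlt, hfilter, hcard]
  have hfatal : fatalShock γ β α b c x n := by
    unfold fatalShock
    rw [hcounts]
    exact hxn
  have hnot : ∀ j, j < n → ¬ fatalShock γ β α b c x j := by
    intro j hj hf
    have hcj := shockCounts_counting γ β α b c x j (fun i hi => hlt i (hi.trans hj))
    unfold fatalShock at hf
    rw [hcj] at hf
    exact absurd (le_trans (hβα _ _) hf) (not_le.mpr (hlt j hj))
  have hnu : nuShock γ β α b c x = n := by
    have h1 : nuShock γ β α b c x ≤ n := Nat.sInf_le hfatal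
    rcases lt_or_eq_of_le h1 with h2 | h2
    · exact absurd (Nat.sInf_mem (⟨n, hfatal⟩ : {i | fatalShock γ β α b c x i}.Nonempty))
        (hnot _ h2)
    · exact h2
  exact ⟨hfatal, hnu, hcounts, hfilter.symm⟩

lemma exists_goodConfig (hγβ : γ < β) {k : ℕ} {x : ℕ → ℝ}
    (hex : ∃ i, fatalShock γ β α b c x i)
    (hk : shockCounts γ β α b c x (nuShock γ β α b c x) = (k, 0)) :
    goodConfig γ β α b c k x (nuShock γ β α b c x)
      ((Finset.range (nuShock γ β α b c x)).filter (fun i => γ ≤ x i)) := by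
  set n := nuShock γ β α b c x with hn
  have hfat : fatalShock γ β α b c x n := Nat.sInf_mem hex
  have hmin : ∀ j, j < n → ¬ fatalShock γ β α b c x j := fun j hj =>
    Nat.notMem_of_lt_sInf hj
  have hzero : ∀ j, j ≤ n → (shockCounts γ β α b c x j).2 = 0 := by
    intro j hj
    have h2 := shockCounts_snd_mono γ β α b c x hj
    dsimp only at h2
    rw [hk] at h2
    omega
  have hlt : ∀ i, i < n → x i < β := by
    intro i hi
    by_contra hc
    push_neg at hc
    have hnf := hmin i hi
    unfold fatalShock at hnf
    push_neg at hnf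
    have h1 : (shockCounts γ β α b c x (i + 1)).2 = (shockCounts γ β α b c x i).2 + 1 := by
      simp only [shockCounts]
      rw [if_pos ⟨hc, hnf⟩]
    have := hzero (i + 1) (by omega)
    omega
  have hcn := shockCounts_counting γ β α b c x n hlt
  rw [hk] at hcn
  have hcard : ((Finset.range n).filter (fun i => γ ≤ x i)).card = k := by
    have := congrArg Prod.fst hcn
    simpa using this.symm
  refine ⟨Finset.mem_powersetCard.mpr ⟨Finset.filter_subset _ _, hcard⟩, ?_, ?_, ?_⟩
  · intro i hi
    rw [Finset.mem_filter, Finset.mem_range] at hi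
    exact ⟨hi.2, hlt i hi.1⟩
  · intro i hi hiS
    rw [Finset.mem_range] at hi
    rw [Finset.mem_filter, Finset.mem_range] at hiS
    push_neg at hiS
    exact hiS hi
  · unfold fatalShock at hfat
    rw [hk] at hfat
    exact hfat

lemma shock_event_iff (hγβ : γ < β) (hβα : ∀ k l : ℕ, β ≤ α + b k - c l)
    (k : ℕ) (x : ℕ → ℝ) :
    ((∃ i, fatalShock γ β α b c x i) ∧
      shockCounts γ β α b c x (nuShock γ β α b c x) = (k, 0)) ↔
    ∃ p : ℕ × Finset ℕ, goodConfig γ β α b c k x p.1 p.2 := by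
  constructor
  · rintro ⟨hex, hk⟩
    exact ⟨(_, _), exists_goodConfig hγβ hex hk⟩
  · rintro ⟨p, hp⟩
    obtain ⟨hfat, hnu, hcounts, -⟩ := goodConfig_spec hγβ hβα hp
    exact ⟨⟨p.1, hfat⟩, by rw [hnu, hcounts]⟩

def shockSet (γ β α : ℝ) (b c : ℕ → ℝ) (k n : ℕ) (S : Finset ℕ) (i : ℕ) : Set ℝ :=
  if i = n then Ici (α + b k - c 0) else if i ∈ S then Ico γ β else Iio γ

lemma goodConfig_iff_inter {k : ℕ} {x : ℕ → ℝ} {n : ℕ} {S : Finset ℕ}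
    (hS : S ∈ Finset.powersetCard k (Finset.range n)) :
    goodConfig γ β α b c k x n S ↔
      ∀ i ∈ Finset.range (n + 1), x i ∈ shockSet γ β α b c k n S i := by
  rw [Finset.mem_powersetCard] at hS
  obtain ⟨hsub, hcard⟩ := hS
  constructor
  · rintro ⟨-, hmem, hout, hxn⟩ i hi
    rw [Finset.mem_range, Nat.lt_succ_iff_lt_or_eq] at hi
    rcases hi with hi | rfl
    · have hne : i ≠ n := Nat.ne_of_lt hi
      unfold shockSet
      rw [if_neg hne]
      by_cases hiS : i ∈ S
      · rw [if_pos hiS]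
        exact ⟨(hmem i hiS).1, (hmem i hiS).2⟩
      · rw [if_neg hiS]
        exact hout i (Finset.mem_range.mpr hi) hiS
    · unfold shockSet
      rw [if_pos rfl]
      exact hxn
  · intro h
    refine ⟨Finset.mem_powersetCard.mpr ⟨hsub, hcard⟩, ?_, ?_, ?_⟩
    · intro i hiS
      have hi : i < n := Finset.mem_range.mp (hsub hiS)
      have := h i (Finset.mem_range.mpr (by omega))
      unfold shockSet at this
      rw [if_neg (Nat.ne_of_lt hi), if_pos hiS] at this
      exact this
    · intro i hi hiS
      have hi' : i < n := Finset.mem_range.mp hi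
      have := h i (Finset.mem_range.mpr (by omega))
      unfold shockSet at this
      rw [if_neg (Nat.ne_of_lt hi'), if_neg hiS] at this
      exact this
    · have := h n (Finset.mem_range.mpr (by omega))
      unfold shockSet at this
      rw [if_pos rfl] at this
      exact this

lemma measurable_shockSet (k n : ℕ) (S : Finset ℕ) (i : ℕ) :
    MeasurableSet (shockSet γ β α b c k n S i) := by
  unfold shockSet
  split_ifs <;> [exact measurableSet_Ici; exact measurableSet_Ico; exact measurableSet_Iio]

end Aux

/-- exact joint distribution of `(N₊(ν), N₋(ν))`, case `l = 0`:
`P{N₊(ν)=k, N₋(ν)=0} = (1 - F̄(β)/F̄(γ))^k ⬝ F̄(α_{k,0})/F̄(γ)`. -/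
theorem shock_joint_exact_zero
    {Ω : Type*} [MeasurableSpace Ω] (P : Measure Ω) [IsProbabilityMeasure P]
    (μ : Measure ℝ) [IsProbabilityMeasure μ]
    (X : ℕ → Ω → ℝ)
    (hindep : iIndepFun X P)
    (hdist : ∀ i, Measure.map (X i) P = μ)
    (hcont : ∀ x : ℝ, μ {x} = 0)
    (γ β α : ℝ) (b c : ℕ → ℝ)
    (hγβ : γ < β)
    (hb : Monotone b) (hc : Monotone c) (hb0 : b 0 = 0) (hc0 : c 0 = 0)
    (hβα : ∀ k l : ℕ, β ≤ α + b k - c l)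
    (hγpos : 0 < survival μ γ)
    (k : ℕ) :
    (P {ω | (∃ i, fatalShock γ β α b c (fun j => X j ω) i) ∧
        (shockCounts γ β α b c (fun j => X j ω)
          (nuShock γ β α b c (fun j => X j ω))) = (k, 0)}).toReal
      = (1 - survival μ β / survival μ γ) ^ k
        * (survival μ (α + b k - c 0) / survival μ γ) := by
  classical
  -- X i is a.e. measurable and preimages have law μ
  have hae : ∀ i, AEMeasurable (X i) P := by
    intro i
    by_contra h
    have h0 := Measure.map_of_not_aemeasurable (μ := P) h
    rw [hdist i] at h0
    have h1 : μ Set.univ = 0 := by rw [h0]; rfl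
    simp [measure_univ] at h1
  have hpre : ∀ (i : ℕ) (s : Set ℝ), MeasurableSet s → P (X i ⁻¹' s) = μ s := by
    intro i s hs
    rw [← hdist i, Measure.map_apply_of_aemeasurable (hae i) hs]
  -- decompose the event
  set A : ℕ × Finset ℕ → Set Ω := fun p =>
    {ω | goodConfig γ β α b c k (fun j => X j ω) p.1 p.2} with hA
  have hEeq : {ω | (∃ i, fatalShock γ β α b c (fun j => X j ω) i) ∧
        (shockCounts γ β α b c (fun j => X j ω)
          (nuShock γ β α b c (fun j => X j ω))) = (k, 0)} = ⋃ p, A p := by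
    ext ω
    simp only [mem_setOf_eq, mem_iUnion, hA]
    exact shock_event_iff hγβ hβα k _
  have hAeq : ∀ p : ℕ × Finset ℕ, A p =
      if p.2 ∈ Finset.powersetCard k (Finset.range p.1)
      then ⋂ i ∈ Finset.range (p.1 + 1), X i ⁻¹' shockSet γ β α b c k p.1 p.2 i
      else ∅ := by
    intro p
    split_ifs with hp
    · ext ω
      simp only [hA, mem_setOf_eq, mem_iInter, mem_preimage]
      exact goodConfig_iff_inter hp
    · ext ω
      simp only [hA, mem_setOf_eq, mem_empty_iff_false, iff_false]
      intro hg
      exact hp hg.1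
  have hnull : ∀ p, NullMeasurableSet (A p) P := by
    intro p
    rw [hAeq p]
    split_ifs
    · exact NullMeasurableSet.iInter fun i => NullMeasurableSet.iInter fun _ =>
        (hae i).nullMeasurableSet_preimage (measurable_shockSet k p.1 p.2 i)
    · exact MeasurableSet.empty.nullMeasurableSet
  have hdisj : Pairwise (Function.onFun Disjoint A) := by
    intro p q hpq
    rw [Function.onFun, Set.disjoint_left]
    intro ω h1 h2
    obtain ⟨-, hnu1, -, hS1⟩ := goodConfig_spec hγβ hβα h1
    obtain ⟨-, hnu2, -, hS2⟩ := goodConfig_spec hγβ hβα h2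
    apply hpq
    have hn : p.1 = q.1 := by rw [← hnu1, ← hnu2]
    exact Prod.ext hn (by rw [hS1, hS2, hn])
  have hmeasE : P (⋃ p, A p) = ∑' p, P (A p) :=
    measure_iUnion₀ (hdisj.mono fun _ _ h => h.aedisjoint) hnull
  -- measure of a single piece
  have hApmeas : ∀ (n : ℕ) (S : Finset ℕ), S ∈ Finset.powersetCard k (Finset.range n) →
      P (A (n, S)) = μ (Ici (α + b k - c 0)) * μ (Ico γ β) ^ k * μ (Iio γ) ^ (n - k) := by
    intro n S hS
    rw [hAeq (n, S), if_pos hS]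
    rw [hindep.measure_inter_preimage_eq_mul (Finset.range (n + 1))
      (sets := shockSet γ β α b c k n S) (fun i _ => measurable_shockSet k n S i)]
    have hcong : ∀ i ∈ Finset.range (n + 1),
        P (X i ⁻¹' shockSet γ β α b c k n S i) = μ (shockSet γ β α b c k n S i) :=
      fun i _ => hpre i _ (measurable_shockSet k n S i)
    rw [Finset.prod_congr rfl hcong, Finset.prod_range_succ]
    obtain ⟨hsub, hcard⟩ := Finset.mem_powersetCard.mp hS
    have h1 : μ (shockSet γ β α b c k n S n) = μ (Ici (α + b k - c 0)) := by
      unfold shockSet; rw [if_pos rfl]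
    have h2 : ∀ i ∈ Finset.range n, μ (shockSet γ β α b c k n S i)
        = if i ∈ S then μ (Ico γ β) else μ (Iio γ) := by
      intro i hi
      unfold shockSet
      rw [if_neg (Nat.ne_of_lt (Finset.mem_range.mp hi))]
      split_ifs <;> rfl
    rw [Finset.prod_congr rfl h2, Finset.prod_ite, Finset.prod_const, Finset.prod_const]
    have h3 : (Finset.range n).filter (fun i => i ∈ S) = S := by
      rw [Finset.filter_mem_eq_inter, Finset.inter_eq_right.mpr hsub]
    have h4 : (Finset.range n).filter (fun i => i ∉ S) = Finset.range n \ S := by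
      rw [Finset.sdiff_eq_filter]
    rw [h3, h4, hcard, Finset.card_sdiff_of_subset hsub, Finset.card_range, hcard, h1]
    ring
  -- total mass
  have hfin : ∀ n : ℕ, (n.choose k : ENNReal) *
      (μ (Ici (α + b k - c 0)) * μ (Ico γ β) ^ k * μ (Iio γ) ^ (n - k)) ≠ ⊤ := by
    intro n
    exact ENNReal.mul_ne_top (ENNReal.natCast_ne_top _)
      (ENNReal.mul_ne_top (ENNReal.mul_ne_top (measure_ne_top μ _)
        (ENNReal.pow_ne_top (measure_ne_top μ _))) (ENNReal.pow_ne_top (measure_ne_top μ _)))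
  have hsum : P (⋃ p, A p) = ∑' n : ℕ, (n.choose k : ENNReal) *
      (μ (Ici (α + b k - c 0)) * μ (Ico γ β) ^ k * μ (Iio γ) ^ (n - k)) := by
    rw [hmeasE]
    rw [show (∑' p : ℕ × Finset ℕ, P (A p)) = ∑' n : ℕ, ∑' S : Finset ℕ, P (A (n, S)) from
      ENNReal.tsum_prod (f := fun n S => P (A (n, S)))]
    refine tsum_congr fun n => ?_
    have hzero : ∀ S : Finset ℕ, S ∉ Finset.powersetCard k (Finset.range n) →
        P (A (n, S)) = 0 := by
      intro S hS
      rw [hAeq (n, S), if_neg hS]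
      exact measure_empty
    rw [tsum_eq_sum hzero,
      Finset.sum_congr rfl (fun S hS => hApmeas n S hS), Finset.sum_const,
      Finset.card_powersetCard, Finset.card_range, nsmul_eq_mul]
  -- pass to real numbers
  rw [hEeq, hsum, ENNReal.tsum_toReal_eq hfin]
  simp only [ENNReal.toReal_mul, ENNReal.toReal_pow, ENNReal.toReal_natCast]
  -- identify the real quantities
  have hIci : ∀ a : ℝ, μ (Ici a) = μ (Ioi a) := by
    intro a
    refine le_antisymm ?_ (measure_mono Ioi_subset_Ici_self)
    rw [← Set.Ioi_insert, Set.insert_eq]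
    calc μ ({a} ∪ Ioi a) ≤ μ {a} + μ (Ioi a) := measure_union_le _ _
      _ = μ (Ioi a) := by rw [hcont a, zero_add]
  have hr : (μ (Ici (α + b k - c 0))).toReal = survival μ (α + b k - c 0) := by
    rw [hIci]; rfl
  have hIcoIoc : μ (Ico γ β) = μ (Ioc γ β) := by
    have e1 : μ (Ico γ β) = μ (Ioo γ β) := by
      refine le_antisymm ?_ (measure_mono Ioo_subset_Ico_self)
      rw [← Set.Ioo_insert_left hγβ, Set.insert_eq]
      calc μ ({γ} ∪ Ioo γ β) ≤ μ {γ} + μ (Ioo γ β) := measure_union_le _ _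
        _ = μ (Ioo γ β) := by rw [hcont γ, zero_add]
    have e2 : μ (Ioc γ β) = μ (Ioo γ β) := by
      refine le_antisymm ?_ (measure_mono Ioo_subset_Ioc_self)
      rw [← Set.Ioo_insert_right hγβ, Set.insert_eq]
      calc μ ({β} ∪ Ioo γ β) ≤ μ {β} + μ (Ioo γ β) := measure_union_le _ _
        _ = μ (Ioo γ β) := by rw [hcont β, zero_add]
    rw [e1, e2]
  have hsplit : μ (Ioi γ) = μ (Ioc γ β) + μ (Ioi β) := by
    rw [← Set.Ioc_union_Ioi_eq_Ioi hγβ.le,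
      measure_union (Set.Ioc_disjoint_Ioi le_rfl) measurableSet_Ioi]
  have hq : (μ (Ico γ β)).toReal = survival μ γ - survival μ β := by
    rw [hIcoIoc]
    have := congrArg ENNReal.toReal hsplit
    rw [ENNReal.toReal_add (measure_ne_top μ _) (measure_ne_top μ _)] at this
    unfold survival
    rw [this]
    ring
  have hprE : (μ (Iio γ)).toReal = 1 - survival μ γ := by
    have hu : μ (Iio γ) + μ (Ici γ) = 1 := by
      rw [← measure_union (Set.Iio_disjoint_Ici le_rfl) measurableSet_Ici,
        Set.Iio_union_Ici, measure_univ]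
    have := congrArg ENNReal.toReal hu
    rw [ENNReal.toReal_add (measure_ne_top μ _) (measure_ne_top μ _), ENNReal.toReal_one] at this
    have h2 : (μ (Ici γ)).toReal = survival μ γ := by rw [hIci]; rfl
    rw [h2] at this
    linarith
  simp only [hr, hq, hprE]
  -- sum the series
  have hFγ1 : survival μ γ ≤ 1 := by
    unfold survival
    calc (μ (Ioi γ)).toReal ≤ (μ Set.univ).toReal :=
      ENNReal.toReal_mono (measure_ne_top μ _) (measure_mono (subset_univ _))
    _ = 1 := by rw [measure_univ, ENNReal.toReal_one]
  have hpr0 : (0:ℝ) ≤ 1 - survival μ γ := by linarith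
  have hpr1 : 1 - survival μ γ < 1 := by linarith
  have hgeo : HasSum (fun m : ℕ => ((m + k).choose k : ℝ) * (1 - survival μ γ) ^ m)
      (1 / (1 - (1 - survival μ γ)) ^ (k + 1)) :=
    hasSum_choose_mul_geometric_of_norm_lt_one k
      (by rw [Real.norm_eq_abs, abs_of_nonneg hpr0]; exact hpr1)
  have hg2 := hgeo.mul_left (survival μ (α + b k - c 0) * (survival μ γ - survival μ β) ^ k)
  have hkey : HasSum (fun n : ℕ => (n.choose k : ℝ) *
      (survival μ (α + b k - c 0) * (survival μ γ - survival μ β) ^ k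
        * (1 - survival μ γ) ^ (n - k)))
      (survival μ (α + b k - c 0) * (survival μ γ - survival μ β) ^ k
        * (1 / (1 - (1 - survival μ γ)) ^ (k + 1))) := by
    have hinj : Function.Injective (fun m : ℕ => m + k) := add_left_injective k
    refine (Function.Injective.hasSum_iff hinj ?_).mp ?_
    · intro n hn
      have hlt : n < k := by
        simp only [Set.mem_range, not_exists] at hn
        by_contra hk2
        push_neg at hk2
        exact hn (n - k) (by omega)
      rw [Nat.choose_eq_zero_of_lt hlt]
      simp
    · convert hg2 using 1
      case e'_3 => rfl
      funext m
      show ((m + k).choose k : ℝ) *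
        (survival μ (α + b k - c 0) * (survival μ γ - survival μ β) ^ k
          * (1 - survival μ γ) ^ (m + k - k)) = _
      rw [Nat.add_sub_cancel]
      ring
  rw [hkey.tsum_eq]
  have h1m : 1 - (1 - survival μ γ) = survival μ γ := by ring
  rw [h1m]
  have hFγne : survival μ γ ≠ 0 := ne_of_gt hγpos
  field_simp
  have hsk : survival μ γ ^ k ≠ 0 := pow_ne_zero _ hFγne
  rw [div_pow, mul_div_assoc', eq_div_iff hsk]
  ring
end

section
/- In the special case a_{k,l} = a ∈ (0,1) for all k, l, the limiting joint distribution P{N_+(ν) = k, N_-(ν) = l} → g(1−g)^k · a(1−a)^l is the product of two geometric distributions; in particular N_+(ν) and N_-(ν) are asymptotically independent. -/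
open MeasureTheory ProbabilityTheory Filter Set

set_option linter.unusedSectionVars false
set_option linter.unusedVariables false

namespace ShockAux

/-- The event of interest: the system fails eventually, with final counts `(k, l)`. -/
def Dyn (γ β α : ℝ) (b c : ℕ → ℝ) (k l : ℕ) (x : ℕ → ℝ) : Prop :=
  (∃ i, fatalShock γ β α b c x i) ∧
    shockCounts γ β α b c x (nuShock γ β α b c x) = (k, l)

lemma shockCounts_zero (γ β α : ℝ) (b c : ℕ → ℝ) (x : ℕ → ℝ) :
    shockCounts γ β α b c x 0 = (0, 0) := rfl

lemma shockCounts_succ (γ β α : ℝ) (b c : ℕ → ℝ) (x : ℕ → ℝ) (n : ℕ) :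
    shockCounts γ β α b c x (n + 1) =
      ((if γ ≤ x n ∧ x n < β ∧ (shockCounts γ β α b c x n).2 = 0 then
          (shockCounts γ β α b c x n).1 + 1 else (shockCounts γ β α b c x n).1),
       (if β ≤ x n ∧ x n < α + b (shockCounts γ β α b c x n).1
            - c (shockCounts γ β α b c x n).2 then
          (shockCounts γ β α b c x n).2 + 1 else (shockCounts γ β α b c x n).2)) := rfl

/-- Key shift lemma: if the first shock puts the counts at `(dk, dl)` and the
parameters `(γ', b', c')` emulate the original process started from `(dk, dl)`,
then the counts of the original process are those of the shifted process plus
`(dk, dl)`. -/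
lemma shockCounts_shift {γ β α : ℝ} {b c : ℕ → ℝ} {γ' : ℝ} {b' c' : ℕ → ℝ}
    {x : ℕ → ℝ} {dk dl : ℕ}
    (h1 : shockCounts γ β α b c x 1 = (dk, dl))
    (hs : ∀ v : ℝ, ∀ p2 : ℕ, (γ ≤ v ∧ v < β ∧ dl + p2 = 0) ↔ (γ' ≤ v ∧ v < β ∧ p2 = 0))
    (hw : ∀ p1 p2 : ℕ, α + b (dk + p1) - c (dl + p2) = α + b' p1 - c' p2) :
    ∀ p : ℕ, shockCounts γ β α b c x (p + 1) =
      (dk + (shockCounts γ' β α b' c' (fun j => x (j + 1)) p).1,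
       dl + (shockCounts γ' β α b' c' (fun j => x (j + 1)) p).2) := by
  intro p
  induction p with
  | zero => simpa [shockCounts_zero] using h1
  | succ p ih =>
      rw [shockCounts_succ, ih, shockCounts_succ]
      set q := shockCounts γ' β α b' c' (fun j => x (j + 1)) p with hq
      have e1 : (γ ≤ x (p + 1) ∧ x (p + 1) < β ∧ dl + q.2 = 0)
          ↔ (γ' ≤ x (p + 1) ∧ x (p + 1) < β ∧ q.2 = 0) := hs _ _
      have e2 : α + b (dk + q.1) - c (dl + q.2) = α + b' q.1 - c' q.2 := hw _ _
      simp only [e2]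
      rw [if_congr e1 rfl rfl]
      by_cases hA : γ' ≤ x (p + 1) ∧ x (p + 1) < β ∧ q.2 = 0 <;>
        by_cases hB : β ≤ x (p + 1) ∧ x (p + 1) < α + b' q.1 - c' q.2
      · rw [if_pos hA, if_pos hB, if_pos hA, if_pos hB]; simp [Nat.add_assoc]
      · rw [if_pos hA, if_neg hB, if_pos hA, if_neg hB]; simp [Nat.add_assoc]
      · rw [if_neg hA, if_pos hB, if_neg hA, if_pos hB]; simp [Nat.add_assoc]
      · rw [if_neg hA, if_neg hB, if_neg hA, if_neg hB]

lemma fatal_shift {γ β α : ℝ} {b c : ℕ → ℝ} {γ' : ℝ} {b' c' : ℕ → ℝ}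
    {x : ℕ → ℝ} {dk dl : ℕ}
    (h1 : shockCounts γ β α b c x 1 = (dk, dl))
    (hs : ∀ v : ℝ, ∀ p2 : ℕ, (γ ≤ v ∧ v < β ∧ dl + p2 = 0) ↔ (γ' ≤ v ∧ v < β ∧ p2 = 0))
    (hw : ∀ p1 p2 : ℕ, α + b (dk + p1) - c (dl + p2) = α + b' p1 - c' p2) :
    ∀ p : ℕ, (fatalShock γ β α b c x (p + 1) ↔
      fatalShock γ' β α b' c' (fun j => x (j + 1)) p) := by
  intro p
  unfold fatalShock
  rw [shockCounts_shift h1 hs hw p]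
  simp [hw]

lemma sInf_shift {S T : Set ℕ} (h0 : 0 ∉ S) (h : ∀ i, (i + 1) ∈ S ↔ i ∈ T)
    (hT : T.Nonempty) : sInf S = sInf T + 1 := by
  have hm : sInf T ∈ T := Nat.sInf_mem hT
  have hmem : sInf T + 1 ∈ S := (h _).2 hm
  refine le_antisymm (Nat.sInf_le hmem) ?_
  refine le_csInf ⟨_, hmem⟩ ?_
  rintro (_ | j) hj
  · exact absurd hj h0
  · exact Nat.succ_le_succ (Nat.sInf_le ((h j).1 hj))

/-- The main shifting lemma on the level of `Dyn`. -/
lemma dyn_shift {γ β α : ℝ} {b c : ℕ → ℝ} {γ' : ℝ} {b' c' : ℕ → ℝ}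
    {x : ℕ → ℝ} {dk dl : ℕ}
    (h1 : shockCounts γ β α b c x 1 = (dk, dl))
    (hs : ∀ v : ℝ, ∀ p2 : ℕ, (γ ≤ v ∧ v < β ∧ dl + p2 = 0) ↔ (γ' ≤ v ∧ v < β ∧ p2 = 0))
    (hw : ∀ p1 p2 : ℕ, α + b (dk + p1) - c (dl + p2) = α + b' p1 - c' p2)
    (h0 : ¬ fatalShock γ β α b c x 0) (k l : ℕ) :
    Dyn γ β α b c k l x ↔
      (dk ≤ k ∧ dl ≤ l ∧ Dyn γ' β α b' c' (k - dk) (l - dl) (fun j => x (j + 1))) := by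
  have hfat : ∀ i, fatalShock γ β α b c x (i + 1) ↔
      fatalShock γ' β α b' c' (fun j => x (j + 1)) i := fatal_shift h1 hs hw
  have hex : (∃ i, fatalShock γ β α b c x i) ↔
      (∃ i, fatalShock γ' β α b' c' (fun j => x (j + 1)) i) := by
    constructor
    · rintro ⟨i, hi⟩
      cases i with
      | zero => exact absurd hi h0
      | succ i => exact ⟨i, (hfat i).1 hi⟩
    · rintro ⟨i, hi⟩; exact ⟨i + 1, (hfat i).2 hi⟩
  constructor
  · rintro ⟨hne, hcount⟩
    have hne' := hex.1 hne
    have hnu : nuShock γ β α b c x = nuShock γ' β α b' c' (fun j => x (j + 1)) + 1 := by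
      refine sInf_shift h0 (fun i => hfat i) ?_
      obtain ⟨i, hi⟩ := hne'; exact ⟨i, hi⟩
    rw [hnu, shockCounts_shift h1 hs hw] at hcount
    have h2 := congrArg Prod.fst hcount
    have h3 := congrArg Prod.snd hcount
    simp only at h2 h3
    refine ⟨by omega, by omega, hne', ?_⟩
    have : (shockCounts γ' β α b' c' (fun j => x (j + 1))
        (nuShock γ' β α b' c' (fun j => x (j + 1)))) =
        ((shockCounts γ' β α b' c' (fun j => x (j + 1))
        (nuShock γ' β α b' c' (fun j => x (j + 1)))).1,
        (shockCounts γ' β α b' c' (fun j => x (j + 1))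
        (nuShock γ' β α b' c' (fun j => x (j + 1)))).2) := rfl
    rw [this, Prod.mk.injEq]; omega
  · rintro ⟨hk, hl, hne', hcount⟩
    have hne := hex.2 hne'
    have hnu : nuShock γ β α b c x = nuShock γ' β α b' c' (fun j => x (j + 1)) + 1 := by
      refine sInf_shift h0 (fun i => hfat i) ?_
      obtain ⟨i, hi⟩ := hne'; exact ⟨i, hi⟩
    refine ⟨hne, ?_⟩
    rw [hnu, shockCounts_shift h1 hs hw, hcount]
    simp only [Prod.mk.injEq]
    omega

end ShockAux

namespace ShockAux

lemma nu_shift {γ β α : ℝ} {b c : ℕ → ℝ} {γ' : ℝ} {b' c' : ℕ → ℝ}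
    {x : ℕ → ℝ} {dk dl : ℕ}
    (h1 : shockCounts γ β α b c x 1 = (dk, dl))
    (hs : ∀ v : ℝ, ∀ p2 : ℕ, (γ ≤ v ∧ v < β ∧ dl + p2 = 0) ↔ (γ' ≤ v ∧ v < β ∧ p2 = 0))
    (hw : ∀ p1 p2 : ℕ, α + b (dk + p1) - c (dl + p2) = α + b' p1 - c' p2)
    (h0 : ¬ fatalShock γ β α b c x 0)
    (hfx : ∃ i, fatalShock γ β α b c x i) :
    nuShock γ β α b c x = nuShock γ' β α b' c' (fun j => x (j + 1)) + 1 := by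
  have hfat := fatal_shift h1 hs hw
  refine sInf_shift h0 (fun i => hfat i) ?_
  obtain ⟨i, hi⟩ := hfx
  cases i with
  | zero => exact absurd hi h0
  | succ i => exact ⟨i, (hfat i).1 hi⟩

/-! ### Regional one-step lemmas -/

section Regional

variable {γ β α : ℝ} {b c : ℕ → ℝ} {x : ℕ → ℝ}

lemma null_facts (hγβ : γ ≤ β) (hβα : β ≤ α + b 0 - c 0) (hx : x 0 < γ) :
    shockCounts γ β α b c x 1 = (0, 0) ∧ ¬ fatalShock γ β α b c x 0 := by
  constructor
  · rw [shockCounts_succ]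
    simp [shockCounts_zero, not_le.2 hx, not_le.2 (lt_of_lt_of_le hx hγβ)]
  · intro h
    have : α + b 0 - c 0 ≤ x 0 := h
    linarith

lemma dyn_null (hγβ : γ ≤ β) (hβα : β ≤ α + b 0 - c 0) (hx : x 0 < γ) (k l : ℕ) :
    Dyn γ β α b c k l x ↔ Dyn γ β α b c k l (fun j => x (j + 1)) := by
  obtain ⟨h1, h0⟩ := null_facts hγβ hβα hx
  have hs : ∀ v : ℝ, ∀ p2 : ℕ, (γ ≤ v ∧ v < β ∧ 0 + p2 = 0) ↔ (γ ≤ v ∧ v < β ∧ p2 = 0) := by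
    intro v p2; simp
  have hw : ∀ p1 p2 : ℕ, α + b (0 + p1) - c (0 + p2) = α + b p1 - c p2 := by
    intro p1 p2; simp
  rw [dyn_shift h1 hs hw h0 k l]
  simp

lemma nu_null (hγβ : γ ≤ β) (hβα : β ≤ α + b 0 - c 0) (hx : x 0 < γ)
    (hfx : ∃ i, fatalShock γ β α b c x i) :
    nuShock γ β α b c x = nuShock γ β α b c (fun j => x (j + 1)) + 1 := by
  obtain ⟨h1, h0⟩ := null_facts hγβ hβα hx
  exact nu_shift h1 (by intro v p2; simp) (by intro p1 p2; simp) h0 hfx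

lemma strengthen_facts (hβα : β ≤ α + b 0 - c 0) (hx1 : γ ≤ x 0) (hx2 : x 0 < β) :
    shockCounts γ β α b c x 1 = (1, 0) ∧ ¬ fatalShock γ β α b c x 0 := by
  constructor
  · rw [shockCounts_succ]
    simp [shockCounts_zero, hx1, hx2, not_le.2 hx2]
  · intro h
    have : α + b 0 - c 0 ≤ x 0 := h
    linarith

lemma dyn_strengthen (hβα : β ≤ α + b 0 - c 0) (hx1 : γ ≤ x 0) (hx2 : x 0 < β) (k l : ℕ) :
    Dyn γ β α b c k l x ↔
      (1 ≤ k ∧ Dyn γ β α (fun j => b (j + 1)) c (k - 1) l (fun j => x (j + 1))) := by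
  obtain ⟨h1, h0⟩ := strengthen_facts hβα hx1 hx2
  have hs : ∀ v : ℝ, ∀ p2 : ℕ, (γ ≤ v ∧ v < β ∧ 0 + p2 = 0) ↔ (γ ≤ v ∧ v < β ∧ p2 = 0) := by
    intro v p2; simp
  have hw : ∀ p1 p2 : ℕ,
      α + b (1 + p1) - c (0 + p2) = α + b (p1 + 1) - c p2 := by
    intro p1 p2; simp [Nat.add_comm]
  rw [dyn_shift h1 hs hw h0 k l]
  constructor
  · rintro ⟨h, -, h'⟩; exact ⟨h, h'⟩
  · rintro ⟨h, h'⟩; exact ⟨h, Nat.zero_le _, h'⟩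

lemma nu_strengthen (hβα : β ≤ α + b 0 - c 0) (hx1 : γ ≤ x 0) (hx2 : x 0 < β)
    (hfx : ∃ i, fatalShock γ β α b c x i) :
    nuShock γ β α b c x
      = nuShock γ β α (fun j => b (j + 1)) c (fun j => x (j + 1)) + 1 := by
  obtain ⟨h1, h0⟩ := strengthen_facts hβα hx1 hx2
  exact nu_shift h1 (by intro v p2; simp)
    (by intro p1 p2; simp [Nat.add_comm]) h0 hfx

lemma weaken_facts (hx1 : β ≤ x 0) (hx2 : x 0 < α + b 0 - c 0) :
    shockCounts γ β α b c x 1 = (0, 1) ∧ ¬ fatalShock γ β α b c x 0 := by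
  constructor
  · rw [shockCounts_succ]
    simp [shockCounts_zero, hx1, hx2, not_lt.2 hx1]
  · intro h
    have : α + b 0 - c 0 ≤ x 0 := h
    linarith

lemma dyn_weaken (hx1 : β ≤ x 0) (hx2 : x 0 < α + b 0 - c 0) (k l : ℕ) :
    Dyn γ β α b c k l x ↔
      (1 ≤ l ∧ Dyn β β α b (fun j => c (j + 1)) k (l - 1) (fun j => x (j + 1))) := by
  obtain ⟨h1, h0⟩ := weaken_facts hx1 hx2
  have hs : ∀ v : ℝ, ∀ p2 : ℕ, (γ ≤ v ∧ v < β ∧ 1 + p2 = 0) ↔ (β ≤ v ∧ v < β ∧ p2 = 0) := by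
    intro v p2
    constructor
    · rintro ⟨-, -, h⟩; omega
    · rintro ⟨h1', h2', -⟩; exact absurd (lt_of_le_of_lt h1' h2') (lt_irrefl β)
  have hw : ∀ p1 p2 : ℕ,
      α + b (0 + p1) - c (1 + p2) = α + b p1 - c (p2 + 1) := by
    intro p1 p2; simp [Nat.add_comm]
  rw [dyn_shift h1 hs hw h0 k l]
  constructor
  · rintro ⟨-, h, h'⟩; exact ⟨h, h'⟩
  · rintro ⟨h, h'⟩; exact ⟨Nat.zero_le _, h, h'⟩

lemma nu_weaken (hx1 : β ≤ x 0) (hx2 : x 0 < α + b 0 - c 0)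
    (hfx : ∃ i, fatalShock γ β α b c x i) :
    nuShock γ β α b c x
      = nuShock β β α b (fun j => c (j + 1)) (fun j => x (j + 1)) + 1 := by
  obtain ⟨h1, h0⟩ := weaken_facts hx1 hx2
  refine nu_shift h1 ?_ (by intro p1 p2; simp [Nat.add_comm]) h0 hfx
  intro v p2
  constructor
  · rintro ⟨-, -, h⟩; omega
  · rintro ⟨h1', h2', -⟩; exact absurd (lt_of_le_of_lt h1' h2') (lt_irrefl β)

lemma fatal_zero (hx : α + b 0 - c 0 ≤ x 0) : fatalShock γ β α b c x 0 := hx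

lemma dyn_fatal (hx : α + b 0 - c 0 ≤ x 0) (k l : ℕ) :
    Dyn γ β α b c k l x ↔ (k = 0 ∧ l = 0) := by
  have hf : fatalShock γ β α b c x 0 := fatal_zero hx
  have hnu : nuShock γ β α b c x = 0 := Nat.sInf_eq_zero.2 (Or.inl hf)
  constructor
  · rintro ⟨-, h⟩
    rw [hnu, shockCounts_zero] at h
    exact ⟨(Prod.mk.injEq _ _ _ _ ▸ h).1.symm, (Prod.mk.injEq _ _ _ _ ▸ h).2.symm⟩
  · rintro ⟨rfl, rfl⟩
    exact ⟨⟨0, hf⟩, by rw [hnu, shockCounts_zero]⟩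

/-- After a first weakening shock, the first count is frozen at `0`. -/
lemma weaken_freeze (hx1 : β ≤ x 0) (hx2 : x 0 < α + b 0 - c 0) :
    ∀ p : ℕ, (shockCounts γ β α b c x (p + 1)).1 = 0 ∧
      (shockCounts γ β α b c x (p + 1)).2 ≠ 0 := by
  intro p
  induction p with
  | zero =>
      rw [(weaken_facts hx1 hx2).1]
      simp
  | succ p ih =>
      rw [shockCounts_succ]
      constructor
      · have : ¬ (γ ≤ x (p + 1) ∧ x (p + 1) < β ∧
            (shockCounts γ β α b c x (p + 1)).2 = 0) := by
          rintro ⟨-, -, h⟩; exact ih.2 h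
        simp [this, ih.1]
      · by_cases h : β ≤ x (p + 1) ∧ x (p + 1) < α + b (shockCounts γ β α b c x (p + 1)).1
            - c (shockCounts γ β α b c x (p + 1)).2 <;> simp [h, ih.2]

end Regional

end ShockAux

namespace ShockAux

/-- Recursive "pattern" predicate: the sequence `x` realizes the given list of
(null bound, event set) pairs in order, separated by null shocks. -/
def Pat : List (ℝ × Set ℝ) → (ℕ → ℝ) → Prop
  | [], _ => True
  | (u, E) :: L, x =>
      ∃ n, (∀ p < n, x p < u) ∧ x n ∈ E ∧ Pat L (fun j => x (n + 1 + j))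

lemma Pat_nil (x : ℕ → ℝ) : Pat [] x := trivial

lemma Pat_cons (u : ℝ) (E : Set ℝ) (L : List (ℝ × Set ℝ)) (x : ℕ → ℝ) :
    Pat ((u, E) :: L) x ↔
      ∃ n, (∀ p < n, x p < u) ∧ x n ∈ E ∧ Pat L (fun j => x (n + 1 + j)) := Iff.rfl

/-- The list of (null bound, event set) pairs describing the event
`{N₊(ν) = k, N₋(ν) = l}`. -/
def mkList : ℝ → ℝ → ℝ → (ℕ → ℝ) → (ℕ → ℝ) → ℕ → ℕ → List (ℝ × Set ℝ)
  | γ, β, α, b, c, k + 1, l =>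
      (γ, Ico γ β) :: mkList γ β α (fun j => b (j + 1)) c k l
  | γ, β, α, b, c, 0, l + 1 =>
      (γ, Ico β (α + b 0 - c 0)) :: mkList β β α b (fun j => c (j + 1)) 0 l
  | γ, _, α, b, c, 0, 0 => [(γ, Ici (α + b 0 - c 0))]
  termination_by _ _ _ _ _ k l => (k, l)

lemma mkList_succ_k (γ β α : ℝ) (b c : ℕ → ℝ) (k l : ℕ) :
    mkList γ β α b c (k + 1) l
      = (γ, Ico γ β) :: mkList γ β α (fun j => b (j + 1)) c k l := by
  rw [mkList]

lemma mkList_succ_l (γ β α : ℝ) (b c : ℕ → ℝ) (l : ℕ) :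
    mkList γ β α b c 0 (l + 1)
      = (γ, Ico β (α + b 0 - c 0)) :: mkList β β α b (fun j => c (j + 1)) 0 l := by
  rw [mkList]

lemma mkList_zero (γ β α : ℝ) (b c : ℕ → ℝ) :
    mkList γ β α b c 0 0 = [(γ, Ici (α + b 0 - c 0))] := by
  rw [mkList]

lemma shift_shift (x : ℕ → ℝ) (n : ℕ) :
    (fun j => x (n + 1 + j)) = (fun j => (fun i => x (i + 1)) (n + j)) := by
  funext j; congr 1; omega

lemma shift_one (x : ℕ → ℝ) :
    (fun j => x (0 + 1 + j)) = (fun j => x (j + 1)) := by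
  funext j; congr 1; omega

/-- Pattern implies the dynamical event, `k = 0` case. -/
lemma pat_dyn_zero (β α : ℝ) :
    ∀ (l : ℕ) (γ : ℝ) (b c : ℕ → ℝ) (x : ℕ → ℝ), γ ≤ β →
      (∀ k' l' : ℕ, β ≤ α + b k' - c l') →
      Pat (mkList γ β α b c 0 l) x → Dyn γ β α b c 0 l x := by
  intro l
  induction l with
  | zero =>
      intro γ b c x hγβ hβα hp
      rw [mkList_zero, Pat_cons] at hp
      obtain ⟨n, hnull, hev, -⟩ := hp
      induction n generalizing x with
      | zero => exact (dyn_fatal hev 0 0).2 ⟨rfl, rfl⟩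
      | succ n ihn =>
          rw [dyn_null hγβ (hβα 0 0) (hnull 0 (Nat.succ_pos n)) 0 0]
          exact ihn (fun j => x (j + 1)) (fun p hp => hnull (p + 1) (by omega)) hev
  | succ l ihl =>
      intro γ b c x hγβ hβα hp
      rw [mkList_succ_l, Pat_cons] at hp
      obtain ⟨n, hnull, hev, htail⟩ := hp
      induction n generalizing x with
      | zero =>
          rw [shift_one] at htail
          have hd : Dyn β β α b (fun j => c (j + 1)) 0 l (fun j => x (j + 1)) :=
            ihl β b (fun j => c (j + 1)) (fun j => x (j + 1)) le_rfl
              (fun k' l' => hβα k' (l' + 1)) htail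
          exact (dyn_weaken hev.1 hev.2 0 (l + 1)).2 ⟨by omega, hd⟩
      | succ n ihn =>
          rw [dyn_null hγβ (hβα 0 0) (hnull 0 (Nat.succ_pos n)) 0 (l + 1)]
          refine ihn (fun j => x (j + 1)) (fun p hp => hnull (p + 1) (by omega)) hev ?_
          rw [shift_shift x (n + 1)] at htail
          exact htail

/-- Pattern implies the dynamical event. -/
lemma pat_dyn (β α : ℝ) :
    ∀ (k l : ℕ) (γ : ℝ) (b c : ℕ → ℝ) (x : ℕ → ℝ), γ ≤ β →
      (∀ k' l' : ℕ, β ≤ α + b k' - c l') →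
      Pat (mkList γ β α b c k l) x → Dyn γ β α b c k l x := by
  intro k
  induction k with
  | zero => exact fun l => pat_dyn_zero β α l
  | succ k ihk =>
      intro l γ b c x hγβ hβα hp
      rw [mkList_succ_k, Pat_cons] at hp
      obtain ⟨n, hnull, hev, htail⟩ := hp
      induction n generalizing x with
      | zero =>
          rw [shift_one] at htail
          have hd : Dyn γ β α (fun j => b (j + 1)) c k l (fun j => x (j + 1)) :=
            ihk l γ (fun j => b (j + 1)) c (fun j => x (j + 1)) hγβ
              (fun k' l' => hβα (k' + 1) l') htail
          exact (dyn_strengthen (hβα 0 0) hev.1 hev.2 (k + 1) l).2 ⟨by omega, hd⟩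
      | succ n ihn =>
          rw [dyn_null hγβ (hβα 0 0) (hnull 0 (Nat.succ_pos n)) (k + 1) l]
          refine ihn (fun j => x (j + 1)) (fun p hp => hnull (p + 1) (by omega)) hev ?_
          rw [shift_shift x (n + 1)] at htail
          exact htail

/-- The dynamical event implies the pattern. -/
lemma dyn_pat (β α : ℝ) :
    ∀ (N : ℕ) (γ : ℝ) (b c : ℕ → ℝ) (k l : ℕ) (x : ℕ → ℝ), γ ≤ β →
      (∀ k' l' : ℕ, β ≤ α + b k' - c l') →
      Dyn γ β α b c k l x → nuShock γ β α b c x = N →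
      Pat (mkList γ β α b c k l) x := by
  intro N
  induction N using Nat.strong_induction_on with
  | _ N ih =>
  intro γ b c k l x hγβ hβα hdyn hN
  rcases lt_or_ge (x 0) γ with h0 | h0
  · -- null shock
    have hnu := nu_null hγβ (hβα 0 0) h0 hdyn.1
    have hdyn' := (dyn_null hγβ (hβα 0 0) h0 k l).1 hdyn
    have hlt : nuShock γ β α b c (fun j => x (j + 1)) < N := by omega
    have hpat := ih _ hlt γ b c k l (fun j => x (j + 1)) hγβ hβα hdyn' rfl
    -- prepend one null shock
    have hd : ∀ u E L, mkList γ β α b c k l = (u, E) :: L → γ ≤ u → Pat (mkList γ β α b c k l) x := by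
      intro u E L hL hu
      rw [hL, Pat_cons]
      rw [hL, Pat_cons] at hpat
      obtain ⟨n, hnull, hev, htail⟩ := hpat
      refine ⟨n + 1, ?_, hev, ?_⟩
      · intro p hp
        cases p with
        | zero => exact lt_of_lt_of_le h0 hu
        | succ p => exact hnull p (by omega)
      · rw [shift_shift x (n + 1)]
        exact htail
    match k, l with
    | k + 1, l => exact hd _ _ _ (mkList_succ_k γ β α b c k l) le_rfl
    | 0, l + 1 => exact hd _ _ _ (mkList_succ_l γ β α b c l) le_rfl
    | 0, 0 => exact hd _ _ _ (mkList_zero γ β α b c) le_rfl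
  rcases lt_or_ge (x 0) β with h1 | h1
  · -- strengthening shock
    have hnu := nu_strengthen (hβα 0 0) h0 h1 hdyn.1
    obtain ⟨hk, hdyn'⟩ := (dyn_strengthen (hβα 0 0) h0 h1 k l).1 hdyn
    match k, hk with
    | k + 1, _ =>
    have hlt : nuShock γ β α (fun j => b (j + 1)) c (fun j => x (j + 1)) < N := by omega
    have hpat := ih _ hlt γ (fun j => b (j + 1)) c (k + 1 - 1) l (fun j => x (j + 1)) hγβ
      (fun k' l' => hβα (k' + 1) l') hdyn' rfl
    rw [mkList_succ_k, Pat_cons]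
    refine ⟨0, by omega, ⟨h0, h1⟩, ?_⟩
    rw [shift_one]
    exact hpat
  rcases lt_or_ge (x 0) (α + b 0 - c 0) with h2 | h2
  · -- weakening shock
    have hnu := nu_weaken h1 h2 hdyn.1
    obtain ⟨hl, hdyn'⟩ := (dyn_weaken h1 h2 k l).1 hdyn
    -- k must be 0
    have hk0 : k = 0 := by
      have hne : {i | fatalShock γ β α b c x i}.Nonempty := hdyn.1
      have hmem := Nat.sInf_mem hne
      have hcount := hdyn.2
      rcases Nat.eq_zero_or_pos (nuShock γ β α b c x) with h | h
      · exfalso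
        have : fatalShock γ β α b c x 0 := by rw [← h]; exact hmem
        exact (weaken_facts (γ := γ) h1 h2).2 this
      · obtain ⟨p, hp⟩ := Nat.exists_eq_add_of_lt h
        rw [hp] at hcount
        have := (weaken_freeze (γ := γ) h1 h2 p).1
        rw [show 0 + p + 1 = p + 1 by omega] at hcount
        rw [hcount] at this
        exact this
    subst hk0
    match l, hl with
    | l + 1, _ =>
    have hlt : nuShock β β α b (fun j => c (j + 1)) (fun j => x (j + 1)) < N := by omega
    have hpat := ih _ hlt β b (fun j => c (j + 1)) 0 (l + 1 - 1) (fun j => x (j + 1)) le_rfl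
      (fun k' l' => hβα k' (l' + 1)) hdyn' rfl
    rw [mkList_succ_l, Pat_cons]
    refine ⟨0, by omega, ⟨h1, h2⟩, ?_⟩
    rw [shift_one]
    exact hpat
  · -- fatal shock
    obtain ⟨rfl, rfl⟩ := (dyn_fatal h2 k l).1 hdyn
    rw [mkList_zero, Pat_cons]
    exact ⟨0, by omega, h2, Pat_nil _⟩

/-- The central set-level characterization. -/
lemma dyn_iff_pat {γ β α : ℝ} {b c : ℕ → ℝ} (hγβ : γ ≤ β)
    (hβα : ∀ k' l' : ℕ, β ≤ α + b k' - c l') (k l : ℕ) (x : ℕ → ℝ) :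
    Dyn γ β α b c k l x ↔ Pat (mkList γ β α b c k l) x :=
  ⟨fun h => dyn_pat β α _ γ b c k l x hγβ hβα h rfl,
   fun h => pat_dyn β α k l γ b c x hγβ hβα h⟩

end ShockAux

namespace ShockAux

section Prob

variable {Ω : Type*} [MeasurableSpace Ω] {P : Measure Ω} [IsProbabilityMeasure P]
  {μ : Measure ℝ} [IsProbabilityMeasure μ] {X : ℕ → Ω → ℝ}

lemma aemeas (hdist : ∀ i, Measure.map (X i) P = μ) (i : ℕ) : AEMeasurable (X i) P := by
  by_contra h
  have h2 := Measure.map_of_not_aemeasurable h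
  rw [hdist i] at h2
  exact IsProbabilityMeasure.ne_zero μ h2

lemma preimage_meas (hdist : ∀ i, Measure.map (X i) P = μ) (i : ℕ) {B : Set ℝ}
    (hB : MeasurableSet B) : P (X i ⁻¹' B) = μ B := by
  rw [← hdist i, Measure.map_apply_of_aemeasurable (aemeas hdist i) hB]

lemma cyl_meas (hindep : iIndepFun X P)
    (hdist : ∀ i, Measure.map (X i) P = μ)
    (F : Finset ℕ) (B : ℕ → Set ℝ) (hB : ∀ i ∈ F, MeasurableSet (B i)) :
    P (⋂ i ∈ F, X i ⁻¹' B i) = ∏ i ∈ F, μ (B i) := by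
  rw [(iIndepFun_iff_measure_inter_preimage_eq_mul.1 hindep) F hB]
  exact Finset.prod_congr rfl fun i hi => preimage_meas hdist i (hB i hi)

lemma pat_nullmeas (hdist : ∀ i, Measure.map (X i) P = μ) :
    ∀ L : List (ℝ × Set ℝ), (∀ p ∈ L, MeasurableSet p.2) → ∀ n₀ : ℕ,
      NullMeasurableSet {ω | Pat L (fun j => X (n₀ + j) ω)} P := by
  intro L
  induction L with
  | nil =>
      intro _ n₀
      have : {ω : Ω | Pat [] (fun j => X (n₀ + j) ω)} = Set.univ := by
        ext ω; simp [Pat]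
      rw [this]
      exact MeasurableSet.univ.nullMeasurableSet
  | cons hd tl ihtl =>
      obtain ⟨u, E⟩ := hd
      intro hm n₀
      have hE : MeasurableSet E := hm (u, E) List.mem_cons_self
      have hseteq : {ω : Ω | Pat ((u, E) :: tl) (fun j => X (n₀ + j) ω)} =
          ⋃ n : ℕ, ((⋂ p ∈ Finset.range n, X (n₀ + p) ⁻¹' Iio u) ∩ X (n₀ + n) ⁻¹' E
            ∩ {ω | Pat tl (fun j => X (n₀ + n + 1 + j) ω)}) := by
        ext ω
        simp only [Set.mem_setOf_eq, Pat_cons, Set.mem_iUnion, Set.mem_inter_iff,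
          Set.mem_iInter, Set.mem_preimage, Finset.mem_range, Set.mem_Iio]
        constructor
        · rintro ⟨n, hnull, hev, htail⟩
          refine ⟨n, ⟨fun p hp => hnull p hp, hev⟩, ?_⟩
          have : (fun j => X (n₀ + n + 1 + j) ω) = fun j => X (n₀ + (n + 1 + j)) ω := by
            funext j; congr 1; omega
          rw [this]; exact htail
        · rintro ⟨n, ⟨hnull, hev⟩, htail⟩
          refine ⟨n, fun p hp => hnull p hp, hev, ?_⟩
          have : (fun j => X (n₀ + (n + 1 + j)) ω) = fun j => X (n₀ + n + 1 + j) ω := by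
            funext j; congr 1; omega
          rw [this]; exact htail
      rw [hseteq]
      refine NullMeasurableSet.iUnion fun n => ?_
      refine NullMeasurableSet.inter (NullMeasurableSet.inter ?_ ?_) ?_
      · refine NullMeasurableSet.biInter (Finset.range n).countable_toSet fun p _ => ?_
        exact (aemeas hdist (n₀ + p)).nullMeasurable measurableSet_Iio
      · exact (aemeas hdist (n₀ + n)).nullMeasurable hE
      · exact ihtl (fun p hp => hm p (List.mem_cons_of_mem _ hp)) (n₀ + n + 1)

/-- The main probability computation, by induction over the pattern list. -/
lemma pat_prob (hindep : iIndepFun X P)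
    (hdist : ∀ i, Measure.map (X i) P = μ) :
    ∀ L : List (ℝ × Set ℝ), (∀ p ∈ L, MeasurableSet p.2) →
      (∀ p ∈ L, ∀ y ∈ p.2, p.1 ≤ y) →
      ∀ (n₀ : ℕ) (F : Finset ℕ) (B : ℕ → Set ℝ), (∀ i ∈ F, MeasurableSet (B i)) →
        (∀ i ∈ F, i < n₀) →
        P ({ω | Pat L (fun j => X (n₀ + j) ω)} ∩ ⋂ i ∈ F, X i ⁻¹' B i)
          = (∏ i ∈ F, μ (B i)) * (L.map (fun p => μ p.2 * (1 - μ (Iio p.1))⁻¹)).prod := by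
  intro L
  induction L with
  | nil =>
      intro _ _ n₀ F B hB hF
      have : {ω : Ω | Pat [] (fun j => X (n₀ + j) ω)} = Set.univ := by
        ext ω; simp [Pat]
      rw [this, Set.univ_inter, cyl_meas hindep hdist F B hB]
      simp
  | cons hd tl ihtl =>
      obtain ⟨u, E⟩ := hd
      intro hm hab n₀ F B hB hF
      have hE : MeasurableSet E := hm (u, E) List.mem_cons_self
      have hEu : ∀ y ∈ E, u ≤ y := fun y hy => hab (u, E) List.mem_cons_self y hy
      -- data for the induction step
      set B' : ℕ → ℕ → Set ℝ := fun n i =>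
        if i = n₀ + n then E else if n₀ ≤ i then Iio u else B i with hB'
      set F' : ℕ → Finset ℕ := fun n =>
        F ∪ (Finset.range (n + 1)).image (fun q => n₀ + q) with hF'
      have hB'meas : ∀ n, ∀ i ∈ F' n, MeasurableSet (B' n i) := by
        intro n i hi
        by_cases h1 : i = n₀ + n
        · simpa [hB', h1] using hE
        · by_cases h2 : n₀ ≤ i
          · simp [hB', h1, h2]
          · have hiF : i ∈ F := by
              rcases Finset.mem_union.1 hi with h | h
              · exact h
              · exfalso
                obtain ⟨q, -, rfl⟩ := Finset.mem_image.1 h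
                omega
            simpa [hB', h1, h2] using hB i hiF
      have hF'lt : ∀ n, ∀ i ∈ F' n, i < n₀ + n + 1 := by
        intro n i hi
        rcases Finset.mem_union.1 hi with h | h
        · have := hF i h; omega
        · obtain ⟨q, hq, rfl⟩ := Finset.mem_image.1 h
          have := Finset.mem_range.1 hq; omega
      -- the decomposition of the event
      have hseteq : {ω : Ω | Pat ((u, E) :: tl) (fun j => X (n₀ + j) ω)}
            ∩ ⋂ i ∈ F, X i ⁻¹' B i =
          ⋃ n : ℕ, ({ω | Pat tl (fun j => X (n₀ + n + 1 + j) ω)}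
            ∩ ⋂ i ∈ F' n, X i ⁻¹' B' n i) := by
        ext ω
        simp only [Set.mem_setOf_eq, Pat_cons, Set.mem_iUnion, Set.mem_inter_iff,
          Set.mem_iInter, Set.mem_preimage, hF', Finset.mem_union, Finset.mem_image,
          Finset.mem_range, Set.mem_Iio]
        constructor
        · rintro ⟨⟨n, hnull, hev, htail⟩, hcyl⟩
          refine ⟨n, ?_, ?_⟩
          · have : (fun j => X (n₀ + n + 1 + j) ω) = fun j => X (n₀ + (n + 1 + j)) ω := by
              funext j; congr 1; omega
            rw [this]; exact htail
          · intro i hi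
            rcases hi with hi | ⟨q, hq, rfl⟩
            · have h1 : ¬ (i = n₀ + n) := by have := hF i hi; omega
              have h2 : ¬ (n₀ ≤ i) := by have := hF i hi; omega
              simpa [hB', h1, h2] using hcyl i hi
            · by_cases h1 : q = n
              · subst h1; simpa [hB'] using hev
              · have h2 : n₀ + q ≠ n₀ + n := by omega
                have h3 : n₀ ≤ n₀ + q := by omega
                simpa [hB', h2, h3, show q ≠ n by omega] using hnull q (by omega)
        · rintro ⟨n, htail, hcyl⟩
          refine ⟨⟨n, ?_, ?_, ?_⟩, ?_⟩
          · intro p hp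
            have h2 : n₀ + p ≠ n₀ + n := by omega
            have h3 : n₀ ≤ n₀ + p := by omega
            have := hcyl (n₀ + p) (Or.inr ⟨p, by omega, rfl⟩)
            simpa [hB', h2, h3, show p ≠ n by omega] using this
          · have := hcyl (n₀ + n) (Or.inr ⟨n, by omega, rfl⟩)
            simpa [hB'] using this
          · have : (fun j => X (n₀ + (n + 1 + j)) ω) = fun j => X (n₀ + n + 1 + j) ω := by
              funext j; congr 1; omega
            rw [this]; exact htail
          · intro i hi
            have h1 : ¬ (i = n₀ + n) := by have := hF i hi; omega
            have h2 : ¬ (n₀ ≤ i) := by have := hF i hi; omega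
            have := hcyl i (Or.inl hi)
            simpa [hB', h1, h2] using this
      rw [hseteq]
      -- the union is a.e.-disjoint and null measurable
      have hdisj : Pairwise (Function.onFun (AEDisjoint P) (fun n =>
          {ω | Pat tl (fun j => X (n₀ + n + 1 + j) ω)} ∩ ⋂ i ∈ F' n, X i ⁻¹' B' n i)) := by
        have key : ∀ n m : ℕ, n < m → Disjoint
            ({ω | Pat tl (fun j => X (n₀ + n + 1 + j) ω)} ∩ ⋂ i ∈ F' n, X i ⁻¹' B' n i)
            ({ω | Pat tl (fun j => X (n₀ + m + 1 + j) ω)} ∩ ⋂ i ∈ F' m, X i ⁻¹' B' m i) := by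
          intro n m hlt
          refine Set.disjoint_left.2 fun ω hω hω' => ?_
          have h1 : X (n₀ + n) ω ∈ E := by
            have := (Set.mem_iInter.1 (Set.mem_iInter.1 hω.2 (n₀ + n)))
              (Finset.mem_union.2 (Or.inr (Finset.mem_image.2 ⟨n, Finset.mem_range.2 (by omega), rfl⟩)))
            simpa [hB'] using this
          have h2 : X (n₀ + n) ω < u := by
            have := (Set.mem_iInter.1 (Set.mem_iInter.1 hω'.2 (n₀ + n)))
              (Finset.mem_union.2 (Or.inr (Finset.mem_image.2 ⟨n, Finset.mem_range.2 (by omega), rfl⟩)))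
            have h3 : n₀ + n ≠ n₀ + m := by omega
            have h4 : n₀ ≤ n₀ + n := by omega
            simpa [hB', h3, h4, show n ≠ m by omega] using this
          exact absurd h2 (not_lt.2 (hEu _ h1))
        intro n m hnm
        rcases hnm.lt_or_gt with h | h
        · exact (key n m h).aedisjoint
        · exact ((key m n h).symm).aedisjoint
      have hnm : ∀ n : ℕ, NullMeasurableSet ({ω | Pat tl (fun j => X (n₀ + n + 1 + j) ω)}
          ∩ ⋂ i ∈ F' n, X i ⁻¹' B' n i) P := by
        intro n
        refine NullMeasurableSet.inter ?_ ?_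
        · have : (fun (ω : Ω) (j : ℕ) => X (n₀ + n + 1 + j) ω)
              = fun ω j => X ((n₀ + n + 1) + j) ω := rfl
          exact pat_nullmeas hdist tl (fun p hp => hm p (List.mem_cons_of_mem _ hp)) (n₀ + n + 1)
        · refine NullMeasurableSet.biInter (F' n).countable_toSet fun i hi => ?_
          exact (aemeas hdist i).nullMeasurable (hB'meas n i hi)
      rw [measure_iUnion₀ hdisj hnm]
      -- compute each term via the induction hypothesis
      have hterm : ∀ n : ℕ, P ({ω | Pat tl (fun j => X (n₀ + n + 1 + j) ω)}
            ∩ ⋂ i ∈ F' n, X i ⁻¹' B' n i)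
          = ((∏ i ∈ F, μ (B i)) * (μ E * (tl.map
              (fun p => μ p.2 * (1 - μ (Iio p.1))⁻¹)).prod)) * (μ (Iio u)) ^ n := by
        intro n
        rw [ihtl (fun p hp => hm p (List.mem_cons_of_mem _ hp))
          (fun p hp => hab p (List.mem_cons_of_mem _ hp)) (n₀ + n + 1) (F' n) (B' n)
          (hB'meas n) (hF'lt n)]
        have hdisjF : Disjoint F ((Finset.range (n + 1)).image (fun q => n₀ + q)) := by
          refine Finset.disjoint_left.2 fun i hi hi' => ?_
          obtain ⟨q, -, rfl⟩ := Finset.mem_image.1 hi'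
          have := hF _ hi; omega
        rw [hF', Finset.prod_union hdisjF]
        have e1 : ∏ i ∈ F, μ (B' n i) = ∏ i ∈ F, μ (B i) := by
          refine Finset.prod_congr rfl fun i hi => ?_
          have h1 : ¬ (i = n₀ + n) := by have := hF i hi; omega
          have h2 : ¬ (n₀ ≤ i) := by have := hF i hi; omega
          simp [hB', h1, h2]
        have e2 : ∏ i ∈ (Finset.range (n + 1)).image (fun q => n₀ + q), μ (B' n i)
            = μ (Iio u) ^ n * μ E := by
          rw [Finset.prod_image (fun x _ y _ h => by omega)]
          rw [Finset.prod_range_succ]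
          have e3 : ∏ q ∈ Finset.range n, μ (B' n (n₀ + q))
              = ∏ q ∈ Finset.range n, μ (Iio u) := by
            refine Finset.prod_congr rfl fun q hq => ?_
            have h2 : n₀ + q ≠ n₀ + n := by have := Finset.mem_range.1 hq; omega
            have h3 : n₀ ≤ n₀ + q := by omega
            simp [hB', h2, h3, show q ≠ n by omega]
          rw [e3, Finset.prod_const]
          simp [hB']
        rw [e1, e2]
        ring
      rw [tsum_congr hterm, ENNReal.tsum_mul_left, ENNReal.tsum_geometric]
      simp only [List.map_cons, List.prod_cons]
      ring

end Prob

end ShockAux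

namespace ShockAux

/-- The per-entry probability factor. -/
noncomputable def factor (μ : Measure ℝ) (p : ℝ × Set ℝ) : ENNReal :=
  μ p.2 * (1 - μ (Iio p.1))⁻¹

/-- Closed form for the probability of the pattern event. -/
noncomputable def Phi (μ : Measure ℝ) (γ β α : ℝ) (b c : ℕ → ℝ) (k l : ℕ) : ENNReal :=
  (μ (Ico γ β) * (1 - μ (Iio γ))⁻¹) ^ k * (1 - μ (Iio γ))⁻¹ *
    ((∏ j ∈ Finset.range l, μ (Ico β (α + b k - c j))) * ((1 - μ (Iio β))⁻¹) ^ l) *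
    μ (Ici (α + b k - c l))

lemma prod_mkList (μ : Measure ℝ) (β α : ℝ) :
    ∀ (k l : ℕ) (γ : ℝ) (b c : ℕ → ℝ),
      ((mkList γ β α b c k l).map (factor μ)).prod = Phi μ γ β α b c k l := by
  intro k
  induction k with
  | succ k ihk =>
      intro l γ b c
      rw [mkList_succ_k, List.map_cons, List.prod_cons, ihk l γ (fun j => b (j + 1)) c]
      show (factor μ (γ, Ico γ β)) * Phi μ γ β α (fun j => b (j + 1)) c k l = _
      unfold Phi factor
      simp only
      rw [pow_succ]
      ring
  | zero =>
      intro l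
      induction l with
      | zero =>
          intro γ b c
          rw [mkList_zero, List.map_cons, List.prod_cons, List.map_nil, List.prod_nil]
          show (factor μ (γ, Ici (α + b 0 - c 0))) * 1 = _
          unfold Phi factor
          simp only
          simp [pow_zero]
          ring
      | succ l ihl =>
          intro γ b c
          rw [mkList_succ_l, List.map_cons, List.prod_cons, ihl β b (fun j => c (j + 1))]
          show (factor μ (γ, Ico β (α + b 0 - c 0)))
            * Phi μ β β α b (fun j => c (j + 1)) 0 l = _
          unfold Phi factor
          simp only [pow_zero, one_mul]
          rw [Finset.prod_range_succ']
          rw [pow_succ]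
          ring

lemma mkList_good (β α : ℝ) :
    ∀ (k l : ℕ) (γ : ℝ) (b c : ℕ → ℝ), γ ≤ β →
      (∀ k' l' : ℕ, β ≤ α + b k' - c l') →
      ∀ p ∈ mkList γ β α b c k l, MeasurableSet p.2 ∧ ∀ y ∈ p.2, p.1 ≤ y := by
  intro k
  induction k with
  | succ k ihk =>
      intro l γ b c hγβ hβα p hp
      rw [mkList_succ_k] at hp
      rcases List.mem_cons.1 hp with rfl | hp
      · exact ⟨measurableSet_Ico, fun y hy => hy.1⟩
      · exact ihk l γ _ c hγβ (fun k' l' => hβα (k' + 1) l') p hp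
  | zero =>
      intro l
      induction l with
      | zero =>
          intro γ b c hγβ hβα p hp
          rw [mkList_zero] at hp
          rcases List.mem_cons.1 hp with rfl | hp
          · exact ⟨measurableSet_Ici,
              fun y hy => le_trans hγβ (le_trans (hβα 0 0) hy)⟩
          · simp at hp
      | succ l ihl =>
          intro γ b c hγβ hβα p hp
          rw [mkList_succ_l] at hp
          rcases List.mem_cons.1 hp with rfl | hp
          · exact ⟨measurableSet_Ico, fun y hy => le_trans hγβ hy.1⟩
          · exact ihl β b (fun j => c (j + 1)) le_rfl
              (fun k' l' => hβα k' (l' + 1)) p hp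

section Prob2

variable {Ω : Type*} [MeasurableSpace Ω] {P : Measure Ω} [IsProbabilityMeasure P]
  {μ : Measure ℝ} [IsProbabilityMeasure μ] {X : ℕ → Ω → ℝ}

/-- The exact probability of the event of interest. -/
lemma event_prob (hindep : iIndepFun X P)
    (hdist : ∀ i, Measure.map (X i) P = μ)
    (γ β α : ℝ) (b c : ℕ → ℝ) (hγβ : γ ≤ β)
    (hβα : ∀ k' l' : ℕ, β ≤ α + b k' - c l') (k l : ℕ) :
    P {ω | Dyn γ β α b c k l (fun j => X j ω)} = Phi μ γ β α b c k l := by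
  have hset : {ω : Ω | Dyn γ β α b c k l (fun j => X j ω)}
      = {ω | Pat (mkList γ β α b c k l) (fun j => X (0 + j) ω)} := by
    ext ω
    rw [Set.mem_setOf_eq, Set.mem_setOf_eq, dyn_iff_pat hγβ hβα k l]
    have : (fun j => X (0 + j) ω) = fun j => X j ω := by
      funext j; rw [Nat.zero_add]
    rw [this]
  rw [hset]
  have hgood := mkList_good β α k l γ b c hγβ hβα
  have := pat_prob hindep hdist (mkList γ β α b c k l)
    (fun p hp => (hgood p hp).1) (fun p hp => (hgood p hp).2) 0 ∅ (fun _ => Set.univ)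
    (by simp) (by simp)
  have h0 : (⋂ i ∈ (∅ : Finset ℕ), X i ⁻¹' Set.univ) = Set.univ := by simp
  rw [h0, Set.inter_univ, Finset.prod_empty, one_mul] at this
  rw [this]
  exact prod_mkList μ β α k l γ b c

end Prob2

end ShockAux

namespace ShockAux

noncomputable def survival' (μ : Measure ℝ) (x : ℝ) : ℝ := (μ (Set.Ioi x)).toReal

section RealConv

variable {μ : Measure ℝ} [IsProbabilityMeasure μ]

lemma Ici_eq_Ioi (hcont : ∀ x : ℝ, μ {x} = 0) (x : ℝ) : μ (Ici x) = μ (Ioi x) := by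
  refine le_antisymm ?_ (measure_mono Set.Ioi_subset_Ici_self)
  have hsub : Ici x ⊆ {x} ∪ Ioi x := by
    intro y hy
    rcases eq_or_lt_of_le (Set.mem_Ici.1 hy) with h | h
    · exact Or.inl (by simp [h.symm])
    · exact Or.inr h
  calc μ (Ici x) ≤ μ ({x} ∪ Ioi x) := measure_mono hsub
    _ ≤ μ {x} + μ (Ioi x) := measure_union_le _ _
    _ = μ (Ioi x) := by rw [hcont x, zero_add]

lemma toReal_Ici (hcont : ∀ x : ℝ, μ {x} = 0) (x : ℝ) :
    (μ (Ici x)).toReal = survival' μ x := by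
  rw [Ici_eq_Ioi hcont x]; rfl

lemma one_sub_Iio (x : ℝ) : 1 - μ (Iio x) = μ (Ici x) := by
  rw [← prob_compl_eq_one_sub measurableSet_Iio, Set.compl_Iio]

lemma Ico_toReal (hcont : ∀ x : ℝ, μ {x} = 0) {x y : ℝ} (hxy : x ≤ y) :
    (μ (Ico x y)).toReal = survival' μ x - survival' μ y := by
  have hdisj : Disjoint (Ico x y) (Ici y) :=
    Set.disjoint_left.2 fun z hz hz' => absurd hz.2 (not_lt.2 hz')
  have hu : μ (Ici x) = μ (Ico x y) + μ (Ici y) := by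
    rw [← Set.Ico_union_Ici_eq_Ici hxy]
    exact measure_union hdisj measurableSet_Ici
  have := congrArg ENNReal.toReal hu
  rw [ENNReal.toReal_add (measure_ne_top μ _) (measure_ne_top μ _),
    toReal_Ici hcont, toReal_Ici hcont] at this
  linarith

lemma Phi_toReal (hcont : ∀ x : ℝ, μ {x} = 0) (γ β α : ℝ) (b c : ℕ → ℝ) (k l : ℕ)
    (hγβ : γ ≤ β) (hβα : ∀ k' l' : ℕ, β ≤ α + b k' - c l') :
    (Phi μ γ β α b c k l).toReal =
      ((survival' μ γ - survival' μ β) * (survival' μ γ)⁻¹) ^ k * (survival' μ γ)⁻¹ *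
        ((∏ j ∈ Finset.range l, (survival' μ β - survival' μ (α + b k - c j))) *
          ((survival' μ β)⁻¹) ^ l) *
        survival' μ (α + b k - c l) := by
  unfold Phi
  simp only [one_sub_Iio, ENNReal.toReal_mul, ENNReal.toReal_pow, ENNReal.toReal_inv,
    ENNReal.toReal_prod]
  rw [Ico_toReal hcont hγβ, toReal_Ici hcont, toReal_Ici hcont, toReal_Ici hcont,
    Finset.prod_congr rfl fun j _ => Ico_toReal hcont (hβα k j)]

end RealConv

end ShockAux

/-- in the special case `a_{k,l} = a ∈ (0,1)` for all `k,l`, the limiting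
joint distribution is the product of two geometric distributions,
`P{N₊(ν)=k, N₋(ν)=l} → g(1-g)^k ⬝ a(1-a)^l`, so that `N₊(ν)` and `N₋(ν)` are
asymptotically independent. -/
theorem shock_joint_asymptotic_geometric
    {Ω : Type*} [MeasurableSpace Ω] (P : Measure Ω) [IsProbabilityMeasure P]
    (μ : Measure ℝ) [IsProbabilityMeasure μ]
    (X : ℕ → Ω → ℝ)
    (hindep : iIndepFun X P)
    (hdist : ∀ i, Measure.map (X i) P = μ)
    (hcont : ∀ x : ℝ, μ {x} = 0)
    (γ β α : ℝ → ℝ) (b c : ℝ → ℕ → ℝ)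
    (hγβ : ∀ t, γ t < β t)
    (hb : ∀ t, Monotone (b t)) (hc : ∀ t, Monotone (c t))
    (hb0 : ∀ t, b t 0 = 0) (hc0 : ∀ t, c t 0 = 0)
    (hβα : ∀ t, ∀ k l : ℕ, β t ≤ α t + b t k - c t l)
    (hγpos : ∀ t, 0 < survival μ (γ t))
    (hβ0 : Tendsto (fun t => survival μ (β t)) atTop (nhds 0))
    (g : ℝ) (hg : g ∈ Set.Ioo (0 : ℝ) 1)
    (hgt : Tendsto (fun t => survival μ (β t) / survival μ (γ t)) atTop (nhds g))
    (a : ℝ) (ha : a ∈ Set.Ioo (0 : ℝ) 1)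
    (hat : ∀ k l : ℕ, Tendsto
      (fun t => survival μ (α t + b t k - c t l) / survival μ (β t)) atTop (nhds a))
    (k l : ℕ) :
    Tendsto (fun t =>
        (P {ω | (∃ i, fatalShock (γ t) (β t) (α t) (b t) (c t) (fun j => X j ω) i) ∧
          (shockCounts (γ t) (β t) (α t) (b t) (c t) (fun j => X j ω)
            (nuShock (γ t) (β t) (α t) (b t) (c t) (fun j => X j ω))) = (k, l)}).toReal)
      atTop
      (nhds (g * (1 - g) ^ k * (a * (1 - a) ^ l))) := by
  classical
  have hsurv : survival μ = ShockAux.survival' μ := rfl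
  have hBpos : ∀ᶠ t in atTop, 0 < survival μ (β t) := by
    filter_upwards [hgt.eventually (eventually_gt_nhds hg.1)] with t ht
    by_contra h
    push_neg at h
    have h0 : survival μ (β t) = 0 := le_antisymm h ENNReal.toReal_nonneg
    rw [h0, zero_div] at ht
    exact lt_irrefl 0 ht
  -- exact formula for the probability, valid whenever `survival μ (β t) > 0`
  have hexact : ∀ t, 0 < survival μ (β t) →
      (P {ω | (∃ i, fatalShock (γ t) (β t) (α t) (b t) (c t) (fun j => X j ω) i) ∧
          (shockCounts (γ t) (β t) (α t) (b t) (c t) (fun j => X j ω)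
            (nuShock (γ t) (β t) (α t) (b t) (c t) (fun j => X j ω))) = (k, l)}).toReal =
        ((survival μ (γ t) - survival μ (β t)) / survival μ (γ t)) ^ k *
          (survival μ (β t) / survival μ (γ t)) *
          (∏ j ∈ Finset.range l,
            ((survival μ (β t) - survival μ (α t + b t k - c t j)) / survival μ (β t))) *
          (survival μ (α t + b t k - c t l) / survival μ (β t)) := by
    intro t hB
    have hset : {ω : Ω | (∃ i, fatalShock (γ t) (β t) (α t) (b t) (c t) (fun j => X j ω) i) ∧
          (shockCounts (γ t) (β t) (α t) (b t) (c t) (fun j => X j ω)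
            (nuShock (γ t) (β t) (α t) (b t) (c t) (fun j => X j ω))) = (k, l)}
        = {ω | ShockAux.Dyn (γ t) (β t) (α t) (b t) (c t) k l (fun j => X j ω)} := rfl
    rw [hset, ShockAux.event_prob hindep hdist _ _ _ _ _ (le_of_lt (hγβ t)) (hβα t) k l,
      ShockAux.Phi_toReal hcont _ _ _ _ _ k l (le_of_lt (hγβ t)) (hβα t), ← hsurv]
    have hG := hγpos t
    have hBne : survival μ (β t) ≠ 0 := ne_of_gt hB
    have hGne : survival μ (γ t) ≠ 0 := ne_of_gt hG
    rw [Finset.prod_div_distrib, Finset.prod_const, Finset.card_range]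
    field_simp
    have hpow : survival μ (β t) ^ l * (survival μ (β t))⁻¹ ^ l = 1 := by
      rw [← mul_pow, mul_inv_cancel₀ hBne, one_pow]
    linear_combination ((∏ x ∈ Finset.range l,
      (survival μ (β t) - survival μ (α t + b t k - c t x))) * survival μ (α t + b t k - c t l) *
      (survival μ (γ t) * (survival μ (γ t))⁻¹ - survival μ (β t) * (survival μ (γ t))⁻¹) ^ k) * hpow
  -- limit of the ratio form
  have h3 : ∀ j : ℕ, Tendsto (fun t => survival μ (α t + b t k - c t j) / survival μ (β t))
      atTop (nhds a) := fun j => hat k j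
  have h1 : Tendsto (fun t => (survival μ (γ t) - survival μ (β t)) / survival μ (γ t))
      atTop (nhds (1 - g)) := by
    refine Tendsto.congr (fun t => ?_) (tendsto_const_nhds.sub hgt)
    rw [sub_div, div_self (ne_of_gt (hγpos t))]
  have h4 : ∀ j : ℕ, Tendsto
      (fun t => (survival μ (β t) - survival μ (α t + b t k - c t j)) / survival μ (β t))
      atTop (nhds (1 - a)) := by
    intro j
    refine Tendsto.congr' ?_ (tendsto_const_nhds.sub (h3 j))
    filter_upwards [hBpos] with t ht
    rw [sub_div, div_self (ne_of_gt ht)]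
  have h5 : Tendsto (fun t => ∏ j ∈ Finset.range l,
      ((survival μ (β t) - survival μ (α t + b t k - c t j)) / survival μ (β t)))
      atTop (nhds ((1 - a) ^ l)) := by
    have := tendsto_finset_prod (Finset.range l) (fun j _ => h4 j)
    simpa [Finset.prod_const, Finset.card_range] using this
  have hlim : Tendsto (fun t =>
      ((survival μ (γ t) - survival μ (β t)) / survival μ (γ t)) ^ k *
        (survival μ (β t) / survival μ (γ t)) *
        (∏ j ∈ Finset.range l,
          ((survival μ (β t) - survival μ (α t + b t k - c t j)) / survival μ (β t))) *
        (survival μ (α t + b t k - c t l) / survival μ (β t)))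
      atTop (nhds ((1 - g) ^ k * g * (1 - a) ^ l * a)) :=
    (((h1.pow k).mul hgt).mul h5).mul (h3 l)
  have hval : (1 - g) ^ k * g * (1 - a) ^ l * a
      = g * (1 - g) ^ k * (a * (1 - a) ^ l) := by ring
  rw [hval] at hlim
  refine Tendsto.congr' ?_ hlim
  filter_upwards [hBpos] with t ht
  exact (hexact t ht).symm
end
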